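/- arXiv:2012.15141 — 5 statements merged into one kernel-verified Lean document; each statement's English description precedes it below -/
import Mathlib

section
/- Let ι: Γ → Γ' be a specialization of graphs (contraction of a set of edges), D a divisor on Γ, and μ a polarization on Γ of degree d. Then for every subset W of the vertices of Γ', one has β_{ι_*(D)}(W) = β_D(ι^{-1}(W)), where β_D(V) = deg(D|_V) - μ(V) + δ_V/2 and δ_V is the number of edges between V and its complement. In particular, if D is μ-semistable, then ι_*(D) is ι_*(μ)-semistable. -/
/-! A common framework for weighted multigraphs, divisors, flows,
subdivisions, pseudo-divisors and specializations, following
"The moduli space of quasistable spin curves". -/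

noncomputable section

/-- A finite weighted multigraph (with a reference orientation of each edge). -/
structure WGraph where
  V : Type
  E : Type
  [fintV : Fintype V]
  [decV : DecidableEq V]
  [fintE : Fintype E]
  [decE : DecidableEq E]
  src : E → V
  tgt : E → V
  w : V → ℕ

namespace WGraph

attribute [instance] WGraph.fintV WGraph.decV WGraph.fintE WGraph.decE

attribute [local instance] Classical.propDecidable

variable (G : WGraph)

/-- Degree of a vertex (loops count twice). -/
def deg (v : G.V) : ℕ :=
  (Finset.univ.filter (fun e => G.src e = v)).card +
    (Finset.univ.filter (fun e => G.tgt e = v)).card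

/-- Degree of a vertex in the edge set `A` (loops count twice). -/
def degIn (A : Finset G.E) (v : G.V) : ℕ :=
  (A.filter (fun e => G.src e = v)).card + (A.filter (fun e => G.tgt e = v)).card

/-- Canonical divisor: `K(v) = 2 w(v) - 2 + deg(v)`. -/
def K (v : G.V) : ℤ := 2 * (G.w v : ℤ) - 2 + (G.deg v : ℤ)

/-- Canonical polarization of degree `g - 1`. -/
def canPol (v : G.V) : ℚ := (G.K v : ℚ) / 2

/-- Oriented edges: `(e, true)` is `src → tgt`, `(e, false)` is the reverse. -/
abbrev OEdge := G.E × Bool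

def osrc (oe : G.OEdge) : G.V := if oe.2 then G.src oe.1 else G.tgt oe.1

def otgt (oe : G.OEdge) : G.V := if oe.2 then G.tgt oe.1 else G.src oe.1

/-- A flow is recorded by its values along the reference orientation;
`flowVal` gives its value on an oriented edge. -/
def flowVal (φ : G.E → ℤ) (oe : G.OEdge) : ℤ := if oe.2 then φ oe.1 else -φ oe.1

/-- The divisor of a flow: `Div(φ)(v) = ∑_{t(e) = v} φ(e)` over oriented edges. -/
def divOf (φ : G.E → ℤ) (v : G.V) : ℤ :=
  (∑ e : G.E, if G.tgt e = v then φ e else 0) -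
    ∑ e : G.E, if G.src e = v then φ e else 0

/-- `e` has exactly one endpoint in `W`. -/
def crossing (W : Finset G.V) (e : G.E) : Prop := (G.src e ∈ W) ≠ (G.tgt e ∈ W)

/-- Number of edges between `W` and its complement. -/
def delta (W : Finset G.V) : ℕ := (Finset.univ.filter (fun e => G.crossing W e)).card

/-- `β_D(W) = deg(D|_W) - μ(W) + δ_W / 2`. -/
def beta (μ : G.V → ℚ) (D : G.V → ℤ) (W : Finset G.V) : ℚ :=
  (∑ v ∈ W, (D v : ℚ)) - (∑ v ∈ W, μ v) + (G.delta W : ℚ) / 2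

def Semistable (μ : G.V → ℚ) (D : G.V → ℤ) : Prop :=
  ∀ W : Finset G.V, W ≠ Finset.univ → 0 ≤ G.beta μ D W

def Stable (μ : G.V → ℚ) (D : G.V → ℤ) : Prop :=
  ∀ W : Finset G.V, W ≠ Finset.univ → W.Nonempty → 0 < G.beta μ D W

def Quasistable (μ : G.V → ℚ) (v₀ : G.V) (D : G.V → ℤ) : Prop :=
  ∀ W : Finset G.V, W ≠ Finset.univ →
    (0 ≤ G.beta μ D W ∧ (v₀ ∈ W → 0 < G.beta μ D W))

/-- An oriented cycle: a nonempty cyclically closed chain of oriented edges,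
with pairwise distinct underlying edges and pairwise distinct vertices. -/
def IsOrientedCycle (c : List G.OEdge) : Prop :=
  c ≠ [] ∧ (c.map Prod.fst).Nodup ∧ (c.map G.osrc).Nodup ∧
    ∀ i : Fin c.length,
      G.otgt (c.get i) = G.osrc (c.get ⟨((i : ℕ) + 1) % c.length, Nat.mod_lt _ i.pos⟩)

/-- A flow is acyclic if there is no oriented cycle on which it is
nonnegative and somewhere positive. -/
def Acyclic (φ : G.E → ℤ) : Prop :=
  ¬∃ c : List G.OEdge, G.IsOrientedCycle c ∧ (∀ oe ∈ c, 0 ≤ G.flowVal φ oe) ∧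
      ∃ oe ∈ c, 0 < G.flowVal φ oe

/-- Adjacency through an edge of `A`. -/
def adjVia (A : Finset G.E) (a b : G.V) : Prop :=
  ∃ e ∈ A, (G.src e = a ∧ G.tgt e = b) ∨ (G.src e = b ∧ G.tgt e = a)

/-- Reachability using only edges of `A`. -/
def ReachVia (A : Finset G.E) : G.V → G.V → Prop := Relation.ReflTransGen (G.adjVia A)

def Connected : Prop := Nonempty G.V ∧ ∀ u v : G.V, G.ReachVia Finset.univ u v

/-- A cyclic subgraph: a set of edges in which every vertex has even degree. -/
def IsCyclicSubgraph (P : Finset G.E) : Prop := ∀ v : G.V, Even (G.degIn P v)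

/-- The characteristic flow of a vertex. -/
def charFlow (v₀ : G.V) (e : G.E) : ℤ :=
  if G.src e = v₀ ∧ G.tgt e ≠ v₀ then 1
  else if G.tgt e = v₀ ∧ G.src e ≠ v₀ then -1 else 0

/-- `Div(v₀)`, the principal divisor attached to a vertex. -/
def DivV (v₀ : G.V) : G.V → ℤ := G.divOf (G.charFlow v₀)

/-- Principal divisors are integer combinations of the `Div(v)`. -/
def Principal (D : G.V → ℤ) : Prop :=
  ∃ a : G.V → ℤ, ∀ v, D v = ∑ u : G.V, a u * G.DivV u v

/-- Number of connected components of the subgraph with all vertices and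
edge set `A`. -/
def numComponents (A : Finset G.E) : ℕ :=
  (Finset.univ.image (fun v => Finset.univ.filter (fun u => G.ReachVia A v u))).card

/-- The subdivision `Γ^S`: one exceptional vertex inserted in each edge of `S`. -/
def subdiv (S : Finset G.E) : WGraph where
  V := G.V ⊕ {e // e ∈ S}
  E := {e // e ∉ S} ⊕ {e // e ∈ S} × Bool
  src := fun x =>
    match x with
    | .inl e => .inl (G.src e.1)
    | .inr (e, b) => if b then .inr e else .inl (G.src e.1)
  tgt := fun x =>
    match x with
    | .inl e => .inl (G.tgt e.1)
    | .inr (e, b) => if b then .inl (G.tgt e.1) else .inr e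
  w := fun v =>
    match v with
    | .inl v => G.w v
    | .inr _ => 0

/-- A pseudo-divisor: value `-1` on every exceptional vertex. -/
def IsPseudoDivisor (S : Finset G.E) (D : (G.subdiv S).V → ℤ) : Prop :=
  ∀ x : {e // e ∈ S}, D (Sum.inr x) = -1

/-- A pseudo-root: `2 D + Div(φ) = K_{Γ^S}` for some acyclic flow `φ` on `Γ^S`. -/
def IsPseudoRoot (S : Finset G.E) (D : (G.subdiv S).V → ℤ) : Prop :=
  G.IsPseudoDivisor S D ∧
    ∃ φ : (G.subdiv S).E → ℤ, (G.subdiv S).Acyclic φ ∧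
      ∀ v, 2 * D v + (G.subdiv S).divOf φ v = (G.subdiv S).K v

/-- Semistability of a pseudo-divisor: semistability on the subdivision with
respect to the (extended) canonical polarization. -/
def IsSemistablePR (S : Finset G.E) (D : (G.subdiv S).V → ℤ) : Prop :=
  (G.subdiv S).Semistable (G.subdiv S).canPol D

/-- `β_{E,D}` for pseudo-divisors, on subsets of the original vertices. -/
def betaPoly (S : Finset G.E) (D : (G.subdiv S).V → ℤ) (W : Finset G.V) : ℚ :=
  (∑ v ∈ W, (D (Sum.inl v) : ℚ)) -
    (∑ v ∈ W, (G.canPol v + (G.degIn S v : ℚ) / 2)) +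
    ((Finset.univ.filter (fun e => e ∉ S ∧ G.crossing W e)).card : ℚ) / 2

/-- Polystability of a pseudo-divisor. -/
def IsPolystable (S : Finset G.E) (D : (G.subdiv S).V → ℤ) : Prop :=
  ∀ W : Finset G.V,
    0 ≤ G.betaPoly S D W ∧ ((∃ e, e ∉ S ∧ G.crossing W e) → 0 < G.betaPoly S D W)

/-- The divisor `D_P` attached to a cyclic subgraph `P`, on `Γ^{E_P}` with
`E_P = Pᶜ`. -/
def DP (P : Finset G.E) : (G.subdiv Pᶜ).V → ℤ := fun x =>
  match x with
  | .inl v => (G.deg v : ℤ) - (G.degIn P v : ℤ) / 2 - 1 + (G.w v : ℤ)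
  | .inr _ => -1

/-- The data of a semistable root-graph together with its acyclic flow. -/
def IsSemistableRootTriple (S : Finset G.E) (D : (G.subdiv S).V → ℤ)
    (φ : (G.subdiv S).E → ℤ) : Prop :=
  G.IsPseudoDivisor S D ∧ G.IsSemistablePR S D ∧ (G.subdiv S).Acyclic φ ∧
    ∀ v, 2 * D v + (G.subdiv S).divOf φ v = (G.subdiv S).K v

/-- The induced subgraph on a vertex set `W`. -/
def induce (W : Finset G.V) : WGraph where
  V := {v // v ∈ W}
  E := {e // G.src e ∈ W ∧ G.tgt e ∈ W}
  src := fun e => ⟨G.src e.1, e.2.1⟩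
  tgt := fun e => ⟨G.tgt e.1, e.2.2⟩
  w := fun v => G.w v.1

/-- Number of edges between `W` and `Wᶜ` incident to `v`. -/
def degCross (W : Finset G.V) (v : G.V) : ℕ :=
  (Finset.univ.filter (fun e => G.src e = v ∧ G.crossing W e)).card +
    (Finset.univ.filter (fun e => G.tgt e = v ∧ G.crossing W e)).card

/-- A specialization (iterated edge contraction) of weighted graphs. -/
structure Spec (G G' : WGraph) where
  vmap : G.V → G'.V
  emap : G'.E → G.E
  emap_inj : Function.Injective emap
  vmap_surj : Function.Surjective vmap
  src_comm : ∀ e', vmap (G.src (emap e')) = G'.src e'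
  tgt_comm : ∀ e', vmap (G.tgt (emap e')) = G'.tgt e'
  contract_eq : ∀ e : G.E, e ∉ Finset.univ.image emap → vmap (G.src e) = vmap (G.tgt e)
  fiber_conn : ∀ u v : G.V, vmap u = vmap v →
    Relation.ReflTransGen
      (fun a b => ∃ e, e ∉ Finset.univ.image emap ∧
        ((G.src e = a ∧ G.tgt e = b) ∨ (G.src e = b ∧ G.tgt e = a))) u v
  weight_eq : ∀ v' : G'.V,
    (G'.w v' : ℤ) =
      (∑ v ∈ Finset.univ.filter (fun v => vmap v = v'), (G.w v : ℤ)) +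
        ((Finset.univ.filter (fun e : G.E =>
            e ∉ Finset.univ.image emap ∧ vmap (G.src e) = v')).card : ℤ) -
        ((Finset.univ.filter (fun v : G.V => vmap v = v')).card : ℤ) + 1

/-- Pushforward of a divisor along a specialization. -/
def Spec.pushDiv {G G' : WGraph} (σ : Spec G G') (D : G.V → ℤ) : G'.V → ℤ :=
  fun v' => ∑ v ∈ Finset.univ.filter (fun v => σ.vmap v = v'), D v

/-- Pushforward of a polarization along a specialization. -/
def Spec.pushPol {G G' : WGraph} (σ : Spec G G') (μ : G.V → ℚ) : G'.V → ℚ :=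
  fun v' => ∑ v ∈ Finset.univ.filter (fun v => σ.vmap v = v'), μ v

/-- The induced map on vertices of subdivisions. -/
def Spec.subdivVmap {G G' : WGraph} (σ : Spec G G') (S : Finset G.E)
    (S' : Finset G'.E) : (G.subdiv S).V → (G'.subdiv S').V := fun x =>
  match x with
  | .inl v => .inl (σ.vmap v)
  | .inr e =>
    if h : ∃ e' : {e' // e' ∈ S'}, σ.emap e'.1 = e.1 then .inr h.choose
    else .inl (σ.vmap (G.src e.1))

/-- Pushforward of a pseudo-divisor (its divisor part) along a specialization. -/
def Spec.pushSubdivDiv {G G' : WGraph} (σ : Spec G G') (S : Finset G.E)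
    (S' : Finset G'.E) (D : (G.subdiv S).V → ℤ) : (G'.subdiv S').V → ℤ := fun y =>
  ∑ x ∈ Finset.univ.filter (fun x => σ.subdivVmap S S' x = y), D x

/-- Extension by zero along the edge injection of a specialization. -/
def Spec.extendBy {G G' : WGraph} (σ : Spec G G') (x : G'.E → ℝ) : G.E → ℝ :=
  fun e => if h : ∃ e', σ.emap e' = e then x h.choose else 0

/-- Same-graph contraction of subdivisions (for `S ⊆ S'`): the vertex map.
`σb e` selects the endpoint to which the exceptional vertex of a contracted
edge `e ∈ S' \ S` is merged (`true` = target, `false` = source). -/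
def contrVmap (S S' : Finset G.E) (σb : G.E → Bool) :
    (G.subdiv S').V → (G.subdiv S).V := fun x =>
  match x with
  | .inl v => .inl v
  | .inr e =>
    if h : e.1 ∈ S then .inr ⟨e.1, h⟩
    else .inl (if σb e.1 then G.tgt e.1 else G.src e.1)

/-- Same-graph contraction of subdivisions: the edge injection. -/
def contrEmap (S S' : Finset G.E) (hSS : S ⊆ S') (σb : G.E → Bool) :
    (G.subdiv S).E → (G.subdiv S').E := fun x =>
  match x with
  | .inl e =>
    if h : e.1 ∈ S' then .inr (⟨e.1, h⟩, !σb e.1) else .inl ⟨e.1, h⟩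
  | .inr eb => .inr (⟨eb.1.1, hSS eb.1.2⟩, eb.2)

/-- Specialization of pseudo-divisors over a fixed graph. -/
def PDSpec (S' : Finset G.E) (D' : (G.subdiv S').V → ℤ) (S : Finset G.E)
    (D : (G.subdiv S).V → ℤ) : Prop :=
  S ⊆ S' ∧ ∃ σb : G.E → Bool,
    ∀ v, D v = ∑ x ∈ Finset.univ.filter (fun x => G.contrVmap S S' σb x = v), D' x

/-- Specialization of semistable root-graphs over a fixed graph: a
specialization of pseudo-divisors pushing the acyclic flow forward. -/
def RootSpec (S' : Finset G.E) (D' : (G.subdiv S').V → ℤ) (S : Finset G.E)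
    (D : (G.subdiv S).V → ℤ) : Prop :=
  ∃ hSS : S ⊆ S', ∃ σb : G.E → Bool,
    (∀ v, D v = ∑ x ∈ Finset.univ.filter (fun x => G.contrVmap S S' σb x = v), D' x) ∧
    ∀ φ' φ : _, (G.subdiv S').Acyclic φ' →
      (∀ v, 2 * D' v + (G.subdiv S').divOf φ' v = (G.subdiv S').K v) →
      (G.subdiv S).Acyclic φ →
      (∀ v, 2 * D v + (G.subdiv S).divOf φ v = (G.subdiv S).K v) →
      ∀ x, φ x = φ' (G.contrEmap S S' hSS σb x)

/-- Underlying edge of `Γ` of an edge of `Γ^S`. -/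
def underE (S : Finset G.E) : (G.subdiv S).E → G.E := fun x =>
  match x with
  | .inl e => e.1
  | .inr eb => eb.1.1

/-- A specialization of triples `(Γ, E, D) ≥ (Γ', E', D')`. -/
structure TripleSpec (G : WGraph) (S : Finset G.E) (D : (G.subdiv S).V → ℤ)
    (G' : WGraph) (S' : Finset G'.E) (D' : (G'.subdiv S').V → ℤ) where
  base : Spec G G'
  sub : Spec (G.subdiv S) (G'.subdiv S')
  vcomm : ∀ v : G.V, sub.vmap (Sum.inl v) = Sum.inl (base.vmap v)
  ecomm : ∀ x : (G'.subdiv S').E, G.underE S (sub.emap x) = base.emap (G'.underE S' x)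
  edges_sub : ∀ e' ∈ S', base.emap e' ∈ S
  push_eq : ∀ y, D' y = ∑ x ∈ Finset.univ.filter (fun x => sub.vmap x = y), D x

/-- A triple specialization is a specialization of root-graphs when it pushes
the (unique) acyclic flows forward. -/
def TripleSpec.IsRootSpec {G : WGraph} {S : Finset G.E} {D : (G.subdiv S).V → ℤ}
    {G' : WGraph} {S' : Finset G'.E} {D' : (G'.subdiv S').V → ℤ}
    (T : TripleSpec G S D G' S' D') : Prop :=
  ∀ φ φ', (G.subdiv S).Acyclic φ →
    (∀ v, 2 * D v + (G.subdiv S).divOf φ v = (G.subdiv S).K v) →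
    (G'.subdiv S').Acyclic φ' →
    (∀ v, 2 * D' v + (G'.subdiv S').divOf φ' v = (G'.subdiv S').K v) →
    ∀ x, φ' x = φ (T.sub.emap x)

/-- The cone `λ` attached to a flow: nonnegative orthant cut by the cycle
equations. -/
def lambdaSet (φ : G.E → ℤ) : Set (G.E → ℝ) :=
  {x | (∀ e, 0 ≤ x e) ∧ ∀ c : List G.OEdge, G.IsOrientedCycle c →
      ((c.map (fun oe => (G.flowVal φ oe : ℝ) * x oe.1)).sum) = 0}

/-- Its relative interior (intersection with the positive orthant). -/
def lambdaInt (φ : G.E → ℤ) : Set (G.E → ℝ) :=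
  {x | (∀ e, 0 < x e) ∧ ∀ c : List G.OEdge, G.IsOrientedCycle c →
      ((c.map (fun oe => (G.flowVal φ oe : ℝ) * x oe.1)).sum) = 0}

/-- Faces of a cone (supporting-hyperplane definition). -/
def IsFaceOf (F C : Set (G.E → ℝ)) : Prop :=
  F = C ∨ ∃ l : (G.E → ℝ) →ₗ[ℝ] ℝ, (∀ x ∈ C, 0 ≤ l x) ∧ F = C ∩ {x | l x = 0}

/-- Facets: faces of codimension one. -/
def IsFacetOf (F C : Set (G.E → ℝ)) : Prop :=
  G.IsFaceOf F C ∧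
    Module.finrank ℝ (Submodule.span ℝ F) + 1 = Module.finrank ℝ (Submodule.span ℝ C)

/-- The vector `u_V` spanning the subspace `L_E`. -/
def uVec (S : Finset G.E) (W : Finset G.V) : (G.subdiv S).E → ℝ := fun x =>
  match x with
  | .inl _ => 0
  | .inr eb =>
    if G.crossing W eb.1.1 then
      (if (if eb.2 then G.tgt eb.1.1 else G.src eb.1.1) ∈ W then 1 else -1)
    else 0

/-- The subspace `L_E ⊆ ℝ^{E(Γ^S)}`. -/
def LSub (S : Finset G.E) : Submodule ℝ ((G.subdiv S).E → ℝ) :=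
  Submodule.span ℝ {u | ∃ W : Finset G.V, (∀ e, G.crossing W e → e ∈ S) ∧ u = G.uVec S W}

/-- The diagonal map `δ_E : ℝ^{E(Γ)} → ℝ^{E(Γ^S)}`. -/
def deltaMap (S : Finset G.E) (x : G.E → ℝ) : (G.subdiv S).E → ℝ := fun e' =>
  match e' with
  | .inl e => x e.1
  | .inr eb => x eb.1.1

/-- One step of a `φ`-path avoiding the edges of `A`. -/
def phiStep (φ : G.E → ℤ) (A : Finset G.E) (a b : G.V) : Prop :=
  ∃ oe : G.OEdge, oe.1 ∉ A ∧ 0 ≤ G.flowVal φ oe ∧ G.osrc oe = a ∧ G.otgt oe = b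

/-- Reachability by `φ`-paths avoiding the edges of `A`. -/
def PhiReach (φ : G.E → ℤ) (A : Finset G.E) : G.V → G.V → Prop :=
  Relation.ReflTransGen (G.phiStep φ A)

/-- The refinement of `Γ` inserting `m e` vertices in the interior of each
edge `e`. -/
def refine (m : G.E → ℕ) : WGraph where
  V := G.V ⊕ (Σ e : G.E, Fin (m e))
  E := Σ e : G.E, Fin (m e + 1)
  src := fun x =>
    if h : (x.2 : ℕ) = 0 then .inl (G.src x.1)
    else .inr ⟨x.1, ⟨(x.2 : ℕ) - 1, by have := x.2.isLt; omega⟩⟩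
  tgt := fun x =>
    if h : (x.2 : ℕ) = m x.1 then .inl (G.tgt x.1)
    else .inr ⟨x.1, ⟨(x.2 : ℕ), by have := x.2.isLt; omega⟩⟩
  w := fun v =>
    match v with
    | .inl v => G.w v
    | .inr _ => 0

end WGraph

attribute [local instance] Classical.propDecidable

/-- For a specialization `ι : Γ → Γ'` of graphs, a divisor `D`
and a polarization `μ` of degree `d` on `Γ`, one has
`β_{ι_*D}(W) = β_D(ι⁻¹(W))` for every `W ⊆ V(Γ')`; in particular if `D` is
`μ`-semistable then `ι_*D` is `ι_*μ`-semistable. -/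
theorem stmt0 (G G' : WGraph) (σ : WGraph.Spec G G') (D : G.V → ℤ) (μ : G.V → ℚ)
    (d : ℤ) (hdeg : ∑ v : G.V, μ v = (d : ℚ)) :
    (∀ W : Finset G'.V,
      G'.beta (σ.pushPol μ) (σ.pushDiv D) W =
        G.beta μ D (Finset.univ.filter (fun v => σ.vmap v ∈ W))) ∧
    (G.Semistable μ D → G'.Semistable (σ.pushPol μ) (σ.pushDiv D)) := by
  classical
  have key : ∀ W : Finset G'.V,
      G'.beta (σ.pushPol μ) (σ.pushDiv D) W =
        G.beta μ D (Finset.univ.filter (fun v => σ.vmap v ∈ W)) := by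
    intro W
    set Wt := Finset.univ.filter (fun v => σ.vmap v ∈ W) with hWt
    have hmem : ∀ v : G.V, v ∈ Wt ↔ σ.vmap v ∈ W := by
      intro v; simp [hWt]
    have hsum : ∀ f : G.V → ℚ,
        (∑ v' ∈ W, ∑ v ∈ Finset.univ.filter (fun v => σ.vmap v = v'), f v)
          = ∑ v ∈ Wt, f v := by
      intro f
      rw [← Finset.sum_fiberwise_of_maps_to (g := σ.vmap)
            (fun v hv => (hmem v).1 hv) f]
      refine Finset.sum_congr rfl fun v' hv' => ?_
      refine Finset.sum_congr ?_ fun _ _ => rfl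
      ext v
      simp only [hWt, Finset.mem_filter, Finset.mem_univ, true_and]
      constructor
      · exact fun h => ⟨h ▸ hv', h⟩
      · exact fun h => h.2
    have hdelta : G'.delta W = G.delta Wt := by
      unfold WGraph.delta
      refine Finset.card_bij (fun e' _ => σ.emap e') ?_ ?_ ?_
      · intro e' he'
        simp only [Finset.mem_filter, Finset.mem_univ, true_and] at he' ⊢
        simpa only [WGraph.crossing, hmem, σ.src_comm, σ.tgt_comm] using he'
      · intro a _ b _ h
        exact σ.emap_inj h
      · intro e he
        simp only [Finset.mem_filter, Finset.mem_univ, true_and] at he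
        have himg : e ∈ Finset.univ.image σ.emap := by
          by_contra hni
          have := σ.contract_eq e hni
          apply he
          simp only [WGraph.crossing, hmem, this, ne_eq, not_not]
        obtain ⟨e', _, rfl⟩ := Finset.mem_image.mp himg
        refine ⟨e', ?_, rfl⟩
        simp only [Finset.mem_filter, Finset.mem_univ, true_and]
        simpa only [WGraph.crossing, hmem, σ.src_comm, σ.tgt_comm] using he
    unfold WGraph.beta
    rw [hdelta]
    congr 1
    congr 1
    · rw [← hsum (fun v => (D v : ℚ))]
      refine Finset.sum_congr rfl fun v' _ => ?_
      simp [WGraph.Spec.pushDiv]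
    · rw [← hsum μ]
      exact Finset.sum_congr rfl fun v' _ => rfl
  refine ⟨key, fun hss W hne => ?_⟩
  rw [key W]
  apply hss
  obtain ⟨v', hv'⟩ : ∃ v', v' ∉ W := by
    by_contra h
    push_neg at h
    exact hne (Finset.eq_univ_iff_forall.mpr h)
  obtain ⟨v, rfl⟩ := σ.vmap_surj v'
  intro h
  exact hv' (by simpa using Finset.eq_univ_iff_forall.mp h v)
end
end

section
/- Let Γ be a connected weighted graph of genus g, μ the canonical polarization of degree g-1 (μ(v) = (2w(v) - 2 + deg(v))/2), D a divisor on Γ, and φ an acyclic flow on Γ with 2D + Div(φ) = K_Γ. If D is μ-stable (β_D(W) > 0 for every proper nonempty W ⊂ V(Γ)), then φ = 0. Conversely, if φ = 0, then D is μ-stable. -/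
/-! A common framework for weighted multigraphs, divisors, flows,
subdivisions, pseudo-divisors and specializations, following
"The moduli space of quasistable spin curves". -/

noncomputable section

namespace WGraph

attribute [local instance] Classical.propDecidable

variable (G : WGraph)

end WGraph


section Aux

namespace WGraph

attribute [local instance] Classical.propDecidable

variable {G : WGraph} {φ : G.E → ℤ}

/-- A walk along oriented edges of nonnegative flow. -/
def IsWalk (G : WGraph) (φ : G.E → ℤ) : List G.OEdge → G.V → G.V → Prop
  | [], a, b => a = b
  | oe :: l, a, b => 0 ≤ G.flowVal φ oe ∧ G.osrc oe = a ∧ G.IsWalk φ l (G.otgt oe) b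

lemma flowVal_not (e : G.E) (b : Bool) :
    G.flowVal φ (e, !b) = - G.flowVal φ (e, b) := by
  cases b <;> simp [WGraph.flowVal]

lemma reach_isWalk {a b : G.V} (h : G.PhiReach φ ∅ a b) : ∃ l, G.IsWalk φ l a b := by
  induction h using Relation.ReflTransGen.head_induction_on with
  | refl => exact ⟨[], rfl⟩
  | head hstep _ ih =>
    obtain ⟨l, hl⟩ := ih
    obtain ⟨oe, _, h1, h2, h3⟩ := hstep
    exact ⟨oe :: l, h1, h2, h3 ▸ hl⟩

lemma isWalk_split {l₁ l₂ : List G.OEdge} {oe : G.OEdge} {a b : G.V}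
    (h : G.IsWalk φ (l₁ ++ oe :: l₂) a b) : G.IsWalk φ l₂ (G.otgt oe) b := by
  induction l₁ generalizing a with
  | nil => exact h.2.2
  | cons x xs ih => exact ih h.2.2

lemma isWalk_nonneg : ∀ {l : List G.OEdge} {a b : G.V}, G.IsWalk φ l a b →
    ∀ oe ∈ l, 0 ≤ G.flowVal φ oe := by
  intro l
  induction l with
  | nil => intro a b _ oe h; simp at h
  | cons x xs ih =>
    intro a b hw oe h
    rcases List.mem_cons.mp h with h | h
    · exact h ▸ hw.1
    · exact ih hw.2.2 oe h

lemma isWalk_simp : ∀ (n : ℕ) (l : List G.OEdge) (a b : G.V), l.length ≤ n →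
    G.IsWalk φ l a b →
    ∃ l', G.IsWalk φ l' a b ∧ (a :: l'.map G.otgt).Nodup ∧
      ∀ x ∈ l'.map G.otgt, x ∈ l.map G.otgt := by
  intro n
  induction n with
  | zero =>
    intro l a b hlen hw
    have : l = [] := List.length_eq_zero_iff.mp (Nat.le_zero.mp hlen)
    subst this
    exact ⟨[], hw, by simp, by simp⟩
  | succ n ih =>
    intro l a b hlen hw
    by_cases ha : a ∈ l.map G.otgt
    · obtain ⟨oe, hmem, hoe⟩ := List.mem_map.mp ha
      obtain ⟨s, t, rfl⟩ := List.append_of_mem hmem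
      have hw2 : G.IsWalk φ t a b := hoe ▸ isWalk_split hw
      have hlt : t.length ≤ n := by
        simp only [List.length_append, List.length_cons] at hlen; omega
      obtain ⟨l', h1, h2, h3⟩ := ih t a b hlt hw2
      refine ⟨l', h1, h2, fun x hx => ?_⟩
      have := h3 x hx
      simp only [List.map_append, List.map_cons, List.mem_append, List.mem_cons] at this ⊢
      tauto
    · cases l with
      | nil => exact ⟨[], hw, by simp, by simp⟩
      | cons oe rest =>
        obtain ⟨hf, hs, hw'⟩ := hw
        have hlt : rest.length ≤ n := by
          simp only [List.length_cons] at hlen; omega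
        obtain ⟨l'', h1, h2, h3⟩ := ih rest (G.otgt oe) b hlt hw'
        refine ⟨oe :: l'', ⟨hf, hs, h1⟩, ?_, ?_⟩
        · simp only [List.map_cons, List.nodup_cons, List.mem_cons] at h2 ⊢
          refine ⟨?_, h2⟩
          rintro (h | h)
          · exact ha (by simp [h])
          · exact ha (by simp only [List.map_cons, List.mem_cons]; right; exact h3 _ h)
        · intro x hx
          simp only [List.map_cons, List.mem_cons] at hx ⊢
          rcases hx with h | h
          · left; exact h
          · right; exact h3 _ h

lemma isWalk_osrc_getElem : ∀ {l : List G.OEdge} {a b : G.V}, G.IsWalk φ l a b →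
    ∀ (i : ℕ) (h : i < l.length) (h' : i < (a :: l.map G.otgt).length),
      G.osrc l[i] = (a :: l.map G.otgt)[i] := by
  intro l
  induction l with
  | nil => intro a b _ i h; simp at h
  | cons oe rest ih =>
    intro a b hw i h h'
    match i with
    | 0 => simpa using hw.2.1
    | (j+1) =>
      simp only [List.getElem_cons_succ, List.map_cons]
      have h2 : j < rest.length := by simpa using h
      exact ih hw.2.2 j h2 (by simp; omega)

lemma isWalk_last : ∀ {l : List G.OEdge} {a b : G.V}, G.IsWalk φ l a b →
    ∀ (h : l.length < (a :: l.map G.otgt).length), (a :: l.map G.otgt)[l.length] = b := by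
  intro l
  induction l with
  | nil => intro a b hw _; exact hw
  | cons oe rest ih =>
    intro a b hw h
    simp only [List.length_cons, List.map_cons, List.getElem_cons_succ]
    exact ih hw.2.2 (by simp)

/-- If the flow is positive on `oe0` and the target of `oe0` reaches its source
by a nonnegative walk, the flow is not acyclic. -/
lemma no_pos_source (hacyc : G.Acyclic φ) {oe0 : G.OEdge} (hpos : 0 < G.flowVal φ oe0)
    (hreach : G.PhiReach φ ∅ (G.otgt oe0) (G.osrc oe0)) : False := by
  classical
  obtain ⟨l0, hl0⟩ := reach_isWalk hreach
  obtain ⟨l, hw, hnd, -⟩ := isWalk_simp l0.length l0 (G.otgt oe0) (G.osrc oe0) le_rfl hl0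
  have hlen1 : (G.otgt oe0 :: l.map G.otgt).length = l.length + 1 := by simp
  have hF1 : ∀ i (h : i < l.length),
      G.osrc l[i] = (G.otgt oe0 :: l.map G.otgt)[i]'(by omega) :=
    fun i h => isWalk_osrc_getElem hw i h (by omega)
  have hF2 : ∀ i (h : i < l.length),
      G.otgt l[i] = (G.otgt oe0 :: l.map G.otgt)[i+1]'(by omega) := by
    intro i h
    simp
  have hF3 : (G.otgt oe0 :: l.map G.otgt)[l.length]'(by omega) = G.osrc oe0 :=
    isWalk_last hw (by omega)
  have hbn : ∀ j (h : j < l.length), G.osrc (l[j]'h) ≠ G.osrc oe0 := by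
    intro j h hcon
    have h1 : (G.otgt oe0 :: l.map G.otgt)[j]'(by omega) =
        (G.otgt oe0 :: l.map G.otgt)[l.length]'(by omega) := by
      rw [← hF1 j h, hcon, hF3]
    have := hnd.getElem_inj_iff.mp h1
    omega
  have hedge : ∀ i j (hi : i < l.length) (hj : j < l.length), i < j →
      (l[i]'hi).1 = (l[j]'hj).1 → False := by
    intro i j hi hj hij he
    have key : G.osrc (l[i]'hi) = G.osrc (l[j]'hj) ∨
        G.osrc (l[i]'hi) = G.otgt (l[j]'hj) := by
      cases hbi : (l[i]'hi).2 <;> cases hbj : (l[j]'hj).2 <;>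
        simp [WGraph.osrc, WGraph.otgt, hbi, hbj, he]
    have hne : (G.otgt oe0 :: l.map G.otgt)[i]'(by omega) =
          (G.otgt oe0 :: l.map G.otgt)[j]'(by omega) ∨
        (G.otgt oe0 :: l.map G.otgt)[i]'(by omega) =
          (G.otgt oe0 :: l.map G.otgt)[j+1]'(by omega) := by
      rcases key with h | h
      · left; rw [← hF1 i hi, ← hF1 j hj, h]
      · right; rw [← hF1 i hi, ← hF2 j hj, h]
    rcases hne with h | h
    · have := hnd.getElem_inj_iff.mp h; omega
    · have := hnd.getElem_inj_iff.mp h; omega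
  have hclen : (oe0 :: l).length = l.length + 1 := by simp
  have hgc0 : (oe0 :: l)[0]'(by omega) = oe0 := rfl
  have hgcs : ∀ k (h : k < l.length), (oe0 :: l)[k+1]'(by omega) = l[k]'h :=
    fun k h => rfl
  apply hacyc
  refine ⟨oe0 :: l, ⟨by simp, ?_, ?_, ?_⟩, ?_, ⟨oe0, by simp, hpos⟩⟩
  · -- edges nodup
    rw [List.nodup_iff_injective_get]
    rintro ⟨i, hi⟩ ⟨j, hj⟩ hij
    simp only [List.get_eq_getElem, List.getElem_map] at hij
    simp only [List.length_map, hclen] at hi hj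
    by_contra hne
    have hne' : i ≠ j := by simpa using hne
    have hcase : ∀ i' (hi' : i' < l.length), (l[i']'hi').1 = oe0.1 → False := by
      intro i' hi' heq
      by_cases hb2 : (l[i']'hi').2 = oe0.2
      · have hpq : l[i']'hi' = oe0 := Prod.ext_iff.mpr ⟨heq, hb2⟩
        exact hbn i' hi' (by rw [hpq])
      · have hbool : (l[i']'hi').2 = !oe0.2 := by
          cases h0 : oe0.2 <;> cases h1 : (l[i']'hi').2 <;> simp_all
        have hval : G.flowVal φ (l[i']'hi') = - G.flowVal φ oe0 := by
          have hpq : l[i']'hi' = (oe0.1, !oe0.2) := Prod.ext_iff.mpr ⟨heq, hbool⟩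
          rw [hpq, flowVal_not]
        have hnn : 0 ≤ G.flowVal φ (l[i']'hi') :=
          isWalk_nonneg hw _ (List.getElem_mem _)
        omega
    by_cases hi0 : i = 0
    · by_cases hj0 : j = 0
      · exact hne' (by omega)
      · obtain ⟨j', rfl⟩ := Nat.exists_eq_succ_of_ne_zero hj0
        subst hi0
        rw [hgc0, hgcs j' (by omega)] at hij
        exact hcase j' (by omega) hij.symm
    · obtain ⟨i', rfl⟩ := Nat.exists_eq_succ_of_ne_zero hi0
      by_cases hj0 : j = 0
      · subst hj0
        rw [hgc0, hgcs i' (by omega)] at hij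
        exact hcase i' (by omega) hij
      · obtain ⟨j', rfl⟩ := Nat.exists_eq_succ_of_ne_zero hj0
        rw [hgcs i' (by omega), hgcs j' (by omega)] at hij
        rcases Nat.lt_or_ge i' j' with h | h
        · exact hedge i' j' (by omega) (by omega) h hij
        · rcases Nat.lt_or_ge j' i' with h2 | h2
          · exact hedge j' i' (by omega) (by omega) h2 hij.symm
          · exact hne' (by omega)
  · -- vertex (osrc) list nodup
    rw [List.nodup_iff_injective_get]
    rintro ⟨i, hi⟩ ⟨j, hj⟩ hij
    simp only [List.get_eq_getElem, List.getElem_map] at hij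
    simp only [List.length_map, hclen] at hi hj
    have hosrc : ∀ k (h : k < l.length + 1), G.osrc ((oe0 :: l)[k]'(by omega)) =
        (G.osrc oe0 :: (G.otgt oe0 :: l.map G.otgt).dropLast)[k]'(by
          simp only [List.length_cons, List.length_dropLast, hlen1]; omega) := by
      intro k h
      match k, h with
      | 0, h => simp [hgc0]
      | m+1, h =>
        rw [hgcs m (by omega), hF1 m (by omega)]
        simp only [List.getElem_cons_succ]
        rw [List.getElem_dropLast]
    rw [hosrc i (by omega), hosrc j (by omega)] at hij
    have hnd2 : (G.osrc oe0 :: (G.otgt oe0 :: l.map G.otgt).dropLast).Nodup := by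
      rw [List.nodup_cons]
      constructor
      · intro hmem
        obtain ⟨k, hk, hk2⟩ := List.mem_iff_getElem.mp hmem
        rw [List.getElem_dropLast] at hk2
        have hklt : k < l.length := by
          simp only [List.length_dropLast, hlen1] at hk; omega
        have h1 : (G.otgt oe0 :: l.map G.otgt)[k]'(by omega) =
            (G.otgt oe0 :: l.map G.otgt)[l.length]'(by omega) := by
          rw [hk2, hF3]
        have := hnd.getElem_inj_iff.mp h1
        omega
      · exact hnd.sublist (List.dropLast_sublist _)
    have := hnd2.getElem_inj_iff.mp hij
    exact Fin.ext this
  · -- cyclic chain condition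
    rintro ⟨i, hi⟩
    simp only [List.get_eq_getElem]
    rw [hclen] at hi
    by_cases hin : i = l.length
    · subst hin
      have hmod : (l.length + 1) % (oe0 :: l).length = 0 := by
        rw [hclen]; simp
      have hgoal : G.otgt ((oe0 :: l)[l.length]'(by omega)) = G.osrc oe0 := by
        rcases Nat.eq_zero_or_pos l.length with h0 | h0
        · have hl0 : l = [] := List.length_eq_zero_iff.mp h0
          subst hl0
          simpa [hgc0, WGraph.IsWalk] using hw
        · have hget : ∀ {α : Type} (L : List α) (i j : ℕ) (hi : i < L.length)
              (hj : j < L.length), i = j → L[i]'hi = L[j]'hj := by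
            intro α L i j hi hj h; subst h; rfl
          have hstep1 : ((oe0 :: l)[l.length]'(by omega)) = l[l.length - 1]'(by omega) :=
            (hget _ l.length (l.length - 1 + 1) (by omega) (by omega) (by omega)).trans
              (hgcs (l.length - 1) (by omega))
          rw [hstep1, hF2 (l.length - 1) (by omega)]
          exact (hget _ (l.length - 1 + 1) l.length (by omega) (by omega)
            (by omega)).trans hF3
      simp only [hmod]
      rw [hgoal, hgc0]
    · have hi' : i < l.length := by omega
      have hmod : (i + 1) % (oe0 :: l).length = i + 1 := by
        rw [hclen]; exact Nat.mod_eq_of_lt (by omega)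
      simp only [hmod]
      rw [hgcs i hi', hF1 i hi']
      match i, hi' with
      | 0, h => simp [hgc0]
      | m+1, h =>
        rw [hgcs m (by omega), hF2 m (by omega)]
  · intro oe hoe
    rcases List.mem_cons.mp hoe with h | h
    · exact h ▸ le_of_lt hpos
    · exact isWalk_nonneg hw oe h

lemma crossing_of_reach {G : WGraph} {W : Finset G.V} {u z : G.V}
    (h : G.ReachVia Finset.univ u z) : u ∈ W → z ∉ W → ∃ e, G.crossing W e := by
  induction h with
  | refl => intro hu hz; exact absurd hu hz
  | tail hab hstep ih =>
    intro hu hz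
    rename_i b c
    by_cases hb : b ∈ W
    · obtain ⟨e, -, h1 | h1⟩ := hstep
      · refine ⟨e, fun hcon => ?_⟩
        rw [h1.1, h1.2] at hcon
        exact hz (hcon ▸ hb)
      · refine ⟨e, fun hcon => ?_⟩
        rw [h1.1, h1.2] at hcon
        exact hz (hcon.symm ▸ hb)
    · exact ih hu hb

end WGraph

end Aux

attribute [local instance] Classical.propDecidable

/-- On a connected weighted graph with the canonical
polarization of degree `g-1`, if `φ` is an acyclic flow with
`2D + Div(φ) = K_Γ`, then `D` is stable if and only if `φ = 0`. -/
theorem stmt1 (G : WGraph) (hconn : G.Connected) (D : G.V → ℤ) (φ : G.E → ℤ)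
    (hacyc : G.Acyclic φ) (heq : ∀ v, 2 * D v + G.divOf φ v = G.K v) :
    G.Stable G.canPol D ↔ ∀ e, φ e = 0 := by
  classical
  have hdiv : ∀ W : Finset G.V, ∑ v ∈ W, G.divOf φ v =
      ∑ e : G.E, ((if G.tgt e ∈ W then φ e else 0) - (if G.src e ∈ W then φ e else 0)) := by
    intro W
    calc ∑ v ∈ W, G.divOf φ v
        = (∑ v ∈ W, ∑ e : G.E, if G.tgt e = v then φ e else 0) -
            ∑ v ∈ W, ∑ e : G.E, if G.src e = v then φ e else 0 := Finset.sum_sub_distrib _ _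
      _ = (∑ e : G.E, ∑ v ∈ W, if G.tgt e = v then φ e else 0) -
            ∑ e : G.E, ∑ v ∈ W, if G.src e = v then φ e else 0 := by
          rw [Finset.sum_comm, Finset.sum_comm (s := W)]
      _ = (∑ e : G.E, if G.tgt e ∈ W then φ e else 0) -
            ∑ e : G.E, if G.src e ∈ W then φ e else 0 := by
          congr 1 <;> exact Finset.sum_congr rfl fun e _ => Finset.sum_ite_eq W _ _
      _ = _ := (Finset.sum_sub_distrib _ _).symm
  have hdelta : ∀ W : Finset G.V,
      (G.delta W : ℤ) = ∑ e : G.E, (if G.crossing W e then (1:ℤ) else 0) := by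
    intro W
    unfold WGraph.delta
    rw [Finset.card_filter]
    push_cast
    simp
  have hbeta : ∀ W : Finset G.V, G.beta G.canPol D W =
      (((G.delta W : ℤ) : ℚ) - ((∑ v ∈ W, G.divOf φ v : ℤ) : ℚ)) / 2 := by
    intro W
    have hDv : ∀ v ∈ W, (D v : ℚ) = (G.K v : ℚ)/2 - (G.divOf φ v : ℚ)/2 := by
      intro v _
      have h := heq v
      have h2 : (2 * (D v : ℚ) + (G.divOf φ v : ℚ)) = (G.K v : ℚ) := by
        exact_mod_cast congrArg (Int.cast : ℤ → ℚ) h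
      linarith
    simp only [WGraph.beta, WGraph.canPol]
    rw [Finset.sum_congr rfl hDv, Finset.sum_sub_distrib, ← Finset.sum_div,
      ← Finset.sum_div]
    push_cast
    ring
  constructor
  · -- Stable → φ = 0
    intro hst e0
    by_contra he0
    have hval : ∃ oe0 : G.OEdge, 0 < G.flowVal φ oe0 := by
      rcases lt_or_gt_of_ne he0 with h | h
      · exact ⟨(e0, false), by simpa [WGraph.flowVal] using h⟩
      · exact ⟨(e0, true), by simpa [WGraph.flowVal] using h⟩
    obtain ⟨oe0, hpos⟩ := hval
    set W : Finset G.V := Finset.univ.filter (fun v => G.PhiReach φ ∅ (G.otgt oe0) v)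
      with hWdef
    have hmemW : ∀ {v}, v ∈ W ↔ G.PhiReach φ ∅ (G.otgt oe0) v := by
      intro v; simp [hWdef]
    have haW : G.otgt oe0 ∈ W := hmemW.mpr Relation.ReflTransGen.refl
    have hclosed : ∀ {u v}, u ∈ W → G.phiStep φ ∅ u v → v ∈ W :=
      fun hu hstep => hmemW.mpr ((hmemW.mp hu).tail hstep)
    have hbW : G.osrc oe0 ∉ W := fun hb => WGraph.no_pos_source hacyc hpos (hmemW.mp hb)
    have hWne : W ≠ Finset.univ := fun h => hbW (h ▸ Finset.mem_univ _)
    have hterm : ∀ e : G.E, (if G.crossing W e then (1:ℤ) else 0) ≤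
        (if G.tgt e ∈ W then φ e else 0) - (if G.src e ∈ W then φ e else 0) := by
      intro e
      by_cases hs : G.src e ∈ W <;> by_cases ht : G.tgt e ∈ W
      · have hnc : ¬ G.crossing W e := by simp [WGraph.crossing, hs, ht]
        simp [hnc, hs, ht]
      · have hcr : G.crossing W e := by simp [WGraph.crossing, hs, ht]
        have hneg : φ e < 0 := by
          by_contra hge
          push_neg at hge
          exact ht (hclosed hs ⟨(e, true), by simp,
            by simpa [WGraph.flowVal] using hge, rfl, rfl⟩)
        simp only [if_pos hcr, if_pos ht, if_neg ht, if_pos hs]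
        omega
      · have hcr : G.crossing W e := by simp [WGraph.crossing, hs, ht]
        have hpos2 : 0 < φ e := by
          by_contra hge
          push_neg at hge
          exact hs (hclosed ht ⟨(e, false), by simp,
            by simpa [WGraph.flowVal] using neg_nonneg.mpr hge, rfl, rfl⟩)
        simp only [if_pos hcr, if_pos ht, if_neg hs]
        omega
      · have hnc : ¬ G.crossing W e := by simp [WGraph.crossing, hs, ht]
        simp [hnc, hs, ht]
    have hsum : (G.delta W : ℤ) ≤ ∑ v ∈ W, G.divOf φ v := by
      rw [hdelta W, hdiv W]
      exact Finset.sum_le_sum fun e _ => hterm e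
    have hb := hst W hWne ⟨_, haW⟩
    rw [hbeta W] at hb
    have hcast : ((G.delta W : ℤ) : ℚ) ≤ ((∑ v ∈ W, G.divOf φ v : ℤ) : ℚ) := by
      exact_mod_cast hsum
    linarith
  · -- φ = 0 → Stable
    intro hφ W hW hWne
    have hδ : 0 < G.delta W := by
      obtain ⟨u, hu⟩ := hWne
      obtain ⟨z, hz⟩ : ∃ z, z ∉ W := by
        by_contra h
        push_neg at h
        exact hW (Finset.eq_univ_iff_forall.mpr h)
      obtain ⟨e, hcr⟩ := WGraph.crossing_of_reach (hconn.2 u z) hu hz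
      exact Finset.card_pos.mpr ⟨e, Finset.mem_filter.mpr ⟨Finset.mem_univ _, hcr⟩⟩
    rw [hbeta W]
    have h0 : ∑ v ∈ W, G.divOf φ v = 0 :=
      Finset.sum_eq_zero fun v _ => by simp [WGraph.divOf, hφ]
    rw [h0]
    have hδ' : (0:ℚ) < (G.delta W : ℚ) := by exact_mod_cast hδ
    push_cast
    linarith
end
end

section
/- Let Γ be a connected weighted graph of genus g, μ the canonical polarization of degree g-1, D a μ-semistable divisor on Γ, and φ an acyclic flow on Γ with 2D + Div(φ) = K_Γ. Then |φ(e)| ≤ 1 for every oriented edge e of Γ. -/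
/-! A common framework for weighted multigraphs, divisors, flows,
subdivisions, pseudo-divisors and specializations, following
"The moduli space of quasistable spin curves". -/

noncomputable section

namespace WGraph

attribute [local instance] Classical.propDecidable

variable (G : WGraph)

end WGraph

namespace WGraph

attribute [local instance] Classical.propDecidable

variable (G : WGraph)

/-- `L` is a walk (chain of oriented edges) from `u` to `v`. -/
def chainP : List G.OEdge → G.V → G.V → Prop
  | [], u, v => u = v
  | oe :: L, u, v => G.osrc oe = u ∧ chainP L (G.otgt oe) v

lemma chainP_src {L : List G.OEdge} {u v : G.V} (h : G.chainP L u v)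
    (i : ℕ) (hi : i < L.length) :
    G.osrc (L[i]'hi) = (u :: L.map G.otgt)[i]'(by simp; omega) := by
  induction L generalizing u i with
  | nil => simp at hi
  | cons oe L ih =>
    obtain ⟨h1, h2⟩ := h
    cases i with
    | zero => simpa using h1
    | succ k =>
      have hk : k < L.length := by simpa using hi
      simpa using ih h2 k hk

lemma chainP_last {L : List G.OEdge} {u v : G.V} (h : G.chainP L u v) :
    (u :: L.map G.otgt)[L.length]'(by simp) = v := by
  induction L generalizing u with
  | nil => simpa [chainP] using h
  | cons oe L ih =>
    obtain ⟨h1, h2⟩ := h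
    simpa using ih h2

lemma chainP_drop {L : List G.OEdge} {u v : G.V} (h : G.chainP L u v)
    (k : ℕ) (hk : k < L.length + 1) :
    G.chainP (L.drop k) ((u :: L.map G.otgt)[k]'(by simp; omega)) v := by
  induction L generalizing u k with
  | nil =>
    have hk0 : k = 0 := by simp at hk; omega
    subst hk0
    simpa using h
  | cons oe L ih =>
    obtain ⟨h1, h2⟩ := h
    cases k with
    | zero => exact ⟨h1, h2⟩
    | succ k =>
      have hk' : k < L.length + 1 := by simpa using hk
      simpa using ih h2 k hk'

/-- Extraction of a vertex-disjoint walk from reachability. -/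
lemma exists_nodup_chain (R : G.V → G.V → Prop) (P : G.OEdge → Prop)
    (hR : ∀ a b, R a b → ∃ oe, P oe ∧ G.osrc oe = a ∧ G.otgt oe = b)
    {u v : G.V} (h : Relation.ReflTransGen R u v) :
    ∃ L, G.chainP L u v ∧ (∀ oe ∈ L, P oe) ∧ (u :: L.map G.otgt).Nodup := by
  induction h using Relation.ReflTransGen.head_induction_on with
  | refl => exact ⟨[], rfl, by simp, by simp⟩
  | head hstep _ ih =>
    rename_i a b _
    obtain ⟨L, hchain, hP, hnd⟩ := ih
    obtain ⟨oe, hPoe, hsrc, htgt⟩ := hR _ _ hstep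
    subst htgt
    by_cases hmem : a ∈ (G.otgt oe :: L.map G.otgt)
    · obtain ⟨k, hk, hget⟩ := List.getElem_of_mem hmem
      have hk' : k < L.length + 1 := by simpa using hk
      refine ⟨L.drop k, ?_, ?_, ?_⟩
      · have := G.chainP_drop hchain k hk'
        rwa [hget] at this
      · exact fun x hx => hP x (List.mem_of_mem_drop hx)
      · have heq : a :: (L.drop k).map G.otgt = (G.otgt oe :: L.map G.otgt).drop k := by
          rw [List.drop_eq_getElem_cons hk, hget]
          simp [List.map_drop]
        rw [heq]
        exact hnd.sublist (List.drop_sublist _ _)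
    · refine ⟨oe :: L, ⟨hsrc, hchain⟩, ?_, ?_⟩
      · intro x hx
        rcases List.mem_cons.1 hx with h | h
        · exact h ▸ hPoe
        · exact hP x h
      · simp only [List.map_cons]
        exact List.nodup_cons.2 ⟨hmem, hnd⟩

lemma osrc_otgt_flip (e : G.E) (b : Bool) :
    G.otgt (e, !b) = G.osrc (e, b) ∧ G.osrc (e, !b) = G.otgt (e, b) := by
  cases b <;> simp [osrc, otgt]

/-- In a vertex-disjoint walk, underlying edges are pairwise distinct. -/
lemma chain_edges_nodup {L : List G.OEdge} {u v : G.V} (h : G.chainP L u v)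
    (hnd : (u :: L.map G.otgt).Nodup) : (L.map Prod.fst).Nodup := by
  have key : ∀ i j : ℕ, (hi : i < L.length) → (hj : j < L.length) → i < j →
      (L[i]'hi).1 ≠ (L[j]'hj).1 := by
    intro i j hi hj hij hEq
    have hvi := G.chainP_src h i hi
    have hvj := G.chainP_src h j hj
    have hvj1 : G.otgt (L[j]'hj) = (u :: L.map G.otgt)[j+1]'(by simp; omega) := by simp
    rcases hLi : L[i]'hi with ⟨ei, bi⟩
    rcases hLj : L[j]'hj with ⟨ej, bj⟩
    rw [hLi] at hvi hEq
    rw [hLj] at hvj hvj1 hEq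
    simp only at hEq
    subst hEq
    cases bi <;> cases bj
    · exact absurd ((List.Nodup.getElem_inj_iff hnd).1 (hvi.symm.trans hvj)) (by omega)
    · have h1 : (u :: L.map G.otgt)[i]'(by simp; omega) =
          (u :: L.map G.otgt)[j+1]'(by simp; omega) := by
        rw [← hvi, ← hvj1]; simp [osrc, otgt]
      exact absurd ((List.Nodup.getElem_inj_iff hnd).1 h1) (by omega)
    · have h1 : (u :: L.map G.otgt)[i]'(by simp; omega) =
          (u :: L.map G.otgt)[j+1]'(by simp; omega) := by
        rw [← hvi, ← hvj1]; simp [osrc, otgt]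
      exact absurd ((List.Nodup.getElem_inj_iff hnd).1 h1) (by omega)
    · exact absurd ((List.Nodup.getElem_inj_iff hnd).1 (hvi.symm.trans hvj)) (by omega)
  rw [List.nodup_iff_injective_get]
  rintro ⟨i, hi⟩ ⟨j, hj⟩ hij
  simp only [List.get_eq_getElem, List.getElem_map] at hij
  simp only [List.length_map] at hi hj
  by_contra hne
  have hne' : i ≠ j := by simpa using hne
  rcases Nat.lt_or_ge i j with h' | h'
  · exact key i j hi hj h' hij
  · exact key j i hj hi (by omega) hij.symm

end WGraph

attribute [local instance] Classical.propDecidable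

/-- If `D` is semistable (canonical polarization of degree
`g-1`) and `φ` is an acyclic flow with `2D + Div(φ) = K_Γ`, then
`|φ(e)| ≤ 1` for every oriented edge `e`. -/
theorem stmt2 (G : WGraph) (hconn : G.Connected) (D : G.V → ℤ)
    (hss : G.Semistable G.canPol D) (φ : G.E → ℤ) (hacyc : G.Acyclic φ)
    (heq : ∀ v, 2 * D v + G.divOf φ v = G.K v) :
    ∀ oe : G.OEdge, |G.flowVal φ oe| ≤ 1 := by
  classical
  suffices hone : ∀ oe : G.OEdge, G.flowVal φ oe ≤ 1 by
    rintro ⟨e, b⟩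
    have h1 := hone (e, b)
    have h2 := hone (e, !b)
    have h3 : G.flowVal φ (e, !b) = -G.flowVal φ (e, b) := by
      cases b <;> simp [WGraph.flowVal]
    rw [h3] at h2
    rw [abs_le]
    omega
  by_contra hbad
  push_neg at hbad
  obtain ⟨oe₀, hoe₀⟩ := hbad
  set e₀ := oe₀.1 with he₀
  set v₀ := G.osrc oe₀ with hv₀
  set v₁ := G.otgt oe₀ with hv₁
  set W : Finset G.V := Finset.univ.filter (fun u => G.PhiReach φ {e₀} v₁ u) with hW
  have hWmem : ∀ u, u ∈ W ↔ G.PhiReach φ {e₀} v₁ u := by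
    intro u; simp [hW]
  have hv₁W : v₁ ∈ W := (hWmem v₁).2 Relation.ReflTransGen.refl
  have hstepW : ∀ a b, a ∈ W → G.phiStep φ {e₀} a b → b ∈ W := by
    intro a b ha hab
    rw [hWmem] at ha ⊢
    exact ha.tail hab
  -- v₀ is not reachable, by acyclicity
  have hv₀W : v₀ ∉ W := by
    intro hmem
    rw [hWmem] at hmem
    obtain ⟨L, hchain, hP, hnd⟩ := G.exists_nodup_chain (G.phiStep φ {e₀})
      (fun oe => oe.1 ≠ e₀ ∧ 0 ≤ G.flowVal φ oe)
      (fun a b hab => by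
        obtain ⟨oe, h1, h2, h3, h4⟩ := hab
        exact ⟨oe, ⟨by simpa using h1, h2⟩, h3, h4⟩) hmem
    have hlast := G.chainP_last hchain
    apply hacyc
    refine ⟨oe₀ :: L, ⟨by simp, ?_, ?_, ?_⟩, ?_, oe₀, List.mem_cons_self, by omega⟩
    · -- edges nodup
      simp only [List.map_cons, List.nodup_cons]
      constructor
      · intro hmem'
        obtain ⟨x, hx, hx1⟩ := List.mem_map.1 hmem'
        exact (hP x hx).1 hx1
      · exact G.chain_edges_nodup hchain hnd
    · -- sources nodup
      simp only [List.map_cons, List.nodup_cons]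
      constructor
      · intro hmem'
        obtain ⟨x, hx, hx1⟩ := List.mem_map.1 hmem'
        obtain ⟨i, hi, hgi⟩ := List.getElem_of_mem hx
        have h1 : (v₁ :: L.map G.otgt)[i]'(by simp; omega)
            = (v₁ :: L.map G.otgt)[L.length]'(by simp) := by
          rw [← G.chainP_src hchain i hi, hgi, hx1, hlast]
        have := (List.Nodup.getElem_inj_iff hnd).1 h1
        omega
      · rw [List.nodup_iff_injective_get]
        rintro ⟨i, hi⟩ ⟨j, hj⟩ hij
        simp only [List.get_eq_getElem, List.getElem_map] at hij
        simp only [List.length_map] at hi hj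
        have h1 : (v₁ :: L.map G.otgt)[i]'(by simp; omega)
            = (v₁ :: L.map G.otgt)[j]'(by simp; omega) := by
          rw [← G.chainP_src hchain i hi, ← G.chainP_src hchain j hj, hij]
        have := (List.Nodup.getElem_inj_iff hnd).1 h1
        simpa using this
    · -- cyclic condition
      rintro ⟨i, hi⟩
      simp only [List.get_eq_getElem, List.length_cons] at hi ⊢
      have hotgt : ∀ k (hk : k < L.length + 1),
          G.otgt ((oe₀ :: L)[k]'(by simp; omega))
            = (v₁ :: L.map G.otgt)[k]'(by simp; omega) := by
        intro k hk
        cases k with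
        | zero => simp [hv₁]
        | succ m => simp
      have hosrc : ∀ m (hm : m < L.length),
          G.osrc ((oe₀ :: L)[m+1]'(by simp; omega))
            = (v₁ :: L.map G.otgt)[m]'(by simp; omega) := by
        intro m hm
        simpa using G.chainP_src hchain m hm
      by_cases hlt : i + 1 < L.length + 1
      · have hmod : (i+1) % (L.length+1) = i+1 := Nat.mod_eq_of_lt hlt
        simp only [hmod]
        rw [hotgt i (by omega), hosrc i (by omega)]
      · have hieq : i = L.length := by omega
        subst hieq
        have hmod : (L.length+1) % (L.length+1) = 0 := Nat.mod_self _
        simp only [hmod]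
        rw [hotgt L.length (by omega), hlast]
        simp [hv₀]
    · -- all flow values nonnegative
      intro x hx
      rcases List.mem_cons.1 hx with h | h
      · subst h; omega
      · exact (hP x h).2
  have hWne : W ≠ Finset.univ := by
    intro h
    exact hv₀W (h ▸ Finset.mem_univ v₀)
  -- the crossing edge set and inflow
  set C : Finset G.E := Finset.univ.filter (fun e => G.crossing W e) with hC
  set inφ : G.E → ℤ := fun e => if G.tgt e ∈ W then φ e else -φ e with hinφ
  have hcross1 : ∀ e ∈ C, e ≠ e₀ → 1 ≤ inφ e := by
    intro e heC hne
    have hcr : G.crossing W e := by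
      simpa [hC] using heC
    by_cases hs : G.src e ∈ W <;> by_cases ht : G.tgt e ∈ W
    · simp [WGraph.crossing, hs, ht] at hcr
    · -- src in, tgt out: flow must go in, i.e. φ e ≤ -1
      have hφ : ¬ (0 ≤ φ e) := by
        intro h0
        refine ht (hstepW _ _ hs ⟨(e, true), ?_, ?_, ?_, ?_⟩) <;>
          simp [WGraph.flowVal, WGraph.osrc, WGraph.otgt, hne, h0]
      simp only [hinφ, if_neg ht]
      omega
    · -- tgt in, src out
      have hφ : ¬ (0 ≤ -φ e) := by
        intro h0
        refine hs (hstepW _ _ ht ⟨(e, false), ?_, ?_, ?_, ?_⟩) <;>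
          simp [WGraph.flowVal, WGraph.osrc, WGraph.otgt, hne, neg_nonneg.mp h0]
      simp only [hinφ, if_pos ht]
      omega
    · simp [WGraph.crossing, hs, ht] at hcr
  have hv₁tgt : v₁ = (if oe₀.2 then G.tgt e₀ else G.src e₀) := by
    rw [hv₁]; rfl
  have hv₀src : v₀ = (if oe₀.2 then G.src e₀ else G.tgt e₀) := by
    rw [hv₀]; rfl
  have hcross0 : e₀ ∈ C ∧ 2 ≤ inφ e₀ := by
    rcases hb : oe₀.2 with _ | _
    · -- oe₀.2 = false : src e₀ = v₁ ∈ W, tgt e₀ = v₀ ∉ W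
      rw [hb] at hv₁tgt hv₀src
      simp only [if_neg (by simp : ¬ (false = true))] at hv₁tgt hv₀src
      have hsW : G.src e₀ ∈ W := hv₁tgt ▸ hv₁W
      have htW : G.tgt e₀ ∉ W := hv₀src ▸ hv₀W
      have hflow : G.flowVal φ oe₀ = -φ e₀ := by
        show (if oe₀.2 then φ oe₀.1 else -φ oe₀.1) = -φ e₀
        rw [hb]; simp [he₀]
      constructor
      · simp only [hC, Finset.mem_filter, Finset.mem_univ, true_and]
        simp [WGraph.crossing, hsW, htW]
      · simp only [hinφ, if_neg htW]
        omega
    · -- oe₀.2 = true : tgt e₀ = v₁ ∈ W, src e₀ = v₀ ∉ W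
      rw [hb] at hv₁tgt hv₀src
      simp only [if_true] at hv₁tgt hv₀src
      have htW : G.tgt e₀ ∈ W := hv₁tgt ▸ hv₁W
      have hsW : G.src e₀ ∉ W := hv₀src ▸ hv₀W
      have hflow : G.flowVal φ oe₀ = φ e₀ := by
        show (if oe₀.2 then φ oe₀.1 else -φ oe₀.1) = φ e₀
        rw [hb]; simp [he₀]
      constructor
      · simp only [hC, Finset.mem_filter, Finset.mem_univ, true_and]
        simp [WGraph.crossing, hsW, htW]
      · simp only [hinφ, if_pos htW]
        omega
  -- sum of divisors over W equals total inflow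
  have hdiv_sum : ∑ v ∈ W, G.divOf φ v = ∑ e ∈ C, inφ e := by
    have step1 : ∑ v ∈ W, G.divOf φ v
        = ∑ e : G.E, ((if G.tgt e ∈ W then φ e else 0)
            - (if G.src e ∈ W then φ e else 0)) := by
      unfold WGraph.divOf
      rw [Finset.sum_sub_distrib, Finset.sum_comm, Finset.sum_comm (s := W),
        ← Finset.sum_sub_distrib]
      refine Finset.sum_congr rfl fun e _ => ?_
      rw [Finset.sum_ite_eq, Finset.sum_ite_eq]
    rw [step1, hC, Finset.sum_filter]
    refine Finset.sum_congr rfl fun e _ => ?_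
    by_cases hs : G.src e ∈ W <;> by_cases ht : G.tgt e ∈ W <;>
      simp [WGraph.crossing, hinφ, hs, ht]
  have hK_sum : ∑ v ∈ W, G.K v = 2 * ∑ v ∈ W, D v + ∑ v ∈ W, G.divOf φ v := by
    rw [Finset.mul_sum, ← Finset.sum_add_distrib]
    exact Finset.sum_congr rfl fun v _ => (heq v).symm
  have hdelta : G.delta W = C.card := rfl
  have hZ : (∑ v ∈ W, G.K v : ℤ) = 2 * ∑ v ∈ W, D v + ∑ e ∈ C, inφ e := by
    rw [hK_sum, hdiv_sum]
  have h2beta : 2 * G.beta G.canPol D W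
      = (C.card : ℚ) - ((∑ e ∈ C, inφ e : ℤ) : ℚ) := by
    unfold WGraph.beta WGraph.canPol
    rw [hdelta]
    have hsumdiv : (∑ v ∈ W, ((G.K v : ℚ) / 2))
        = ((∑ v ∈ W, G.K v : ℤ) : ℚ) / 2 := by
      rw [← Finset.sum_div]
      push_cast
      ring
    rw [hsumdiv, hZ]
    push_cast
    ring
  have hbeta := hss W hWne
  have hb2 : (0:ℚ) ≤ (C.card : ℚ) - ((∑ e ∈ C, inφ e : ℤ) : ℚ) := by
    rw [← h2beta]
    linarith
  have hSle : (∑ e ∈ C, inφ e) ≤ (C.card : ℤ) := by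
    have : ((∑ e ∈ C, inφ e : ℤ) : ℚ) ≤ ((C.card : ℤ) : ℚ) := by push_cast at hb2 ⊢; linarith
    exact_mod_cast this
  have hge : (C.card : ℤ) + 1 ≤ ∑ e ∈ C, inφ e := by
    have h1 : ∀ e ∈ C, 0 ≤ inφ e - 1 := by
      intro e he
      by_cases hcase : e = e₀
      · subst hcase; linarith [hcross0.2]
      · linarith [hcross1 e he hcase]
    have h2 : inφ e₀ - 1 ≤ ∑ e ∈ C, (inφ e - 1) :=
      Finset.single_le_sum h1 hcross0.1
    have h3 : ∑ e ∈ C, (inφ e - 1) = ∑ e ∈ C, inφ e - C.card := by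
      rw [Finset.sum_sub_distrib]
      simp
    have h4 : 2 ≤ inφ e₀ := hcross0.2
    omega
  omega
end
end

section
/- Let Γ be a connected weighted graph of genus g, μ the canonical polarization of degree g-1, D a μ-semistable divisor, and φ an acyclic flow with 2D + Div(φ) = K_Γ. Then for a subset V of vertices, β_D(V) = 0 if and only if φ(e) = 1 for every oriented edge e from the complement of V into V. -/
/-! A common framework for weighted multigraphs, divisors, flows,
subdivisions, pseudo-divisors and specializations, following
"The moduli space of quasistable spin curves". -/

noncomputable section

namespace WGraph

attribute [local instance] Classical.propDecidable

variable (G : WGraph)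

end WGraph

attribute [local instance] Classical.propDecidable

namespace Stmt3Aux

open Finset

variable (G : WGraph)

lemma sum_divOf (φ : G.E → ℤ) (W : Finset G.V) :
    ∑ v ∈ W, G.divOf φ v =
      ∑ e ∈ Finset.univ.filter (fun e => G.crossing W e),
        (if G.tgt e ∈ W then φ e else -φ e) := by
  unfold WGraph.divOf
  rw [Finset.sum_sub_distrib, Finset.sum_comm, Finset.sum_comm (s := W)]
  have h1 : ∀ e : G.E, (∑ v ∈ W, if G.tgt e = v then φ e else 0) =
      if G.tgt e ∈ W then φ e else 0 := fun e => Finset.sum_ite_eq W (G.tgt e) (fun _ => φ e)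
  have h2 : ∀ e : G.E, (∑ v ∈ W, if G.src e = v then φ e else 0) =
      if G.src e ∈ W then φ e else 0 := fun e => Finset.sum_ite_eq W (G.src e) (fun _ => φ e)
  simp only [h1, h2]
  rw [← Finset.sum_sub_distrib,
    ← Finset.sum_filter_add_sum_filter_not Finset.univ (fun e => G.crossing W e)]
  have hz : ∑ e ∈ Finset.univ.filter (fun e => ¬ G.crossing W e),
      ((if G.tgt e ∈ W then φ e else 0) - (if G.src e ∈ W then φ e else 0)) = 0 := by
    apply Finset.sum_eq_zero
    intro e he
    simp only [Finset.mem_filter] at he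
    have : (G.src e ∈ W) = (G.tgt e ∈ W) := by
      by_contra h
      exact he.2 h
    by_cases h : G.tgt e ∈ W
    · rw [if_pos h, if_pos (this ▸ h), sub_self]
    · rw [if_neg h, if_neg (this ▸ h), sub_self]
  rw [hz, add_zero]
  apply Finset.sum_congr rfl
  intro e he
  simp only [Finset.mem_filter] at he
  have hc := he.2
  by_cases h : G.tgt e ∈ W
  · have hs : G.src e ∉ W := fun hs => hc (by rw [eq_iff_iff]; exact iff_of_true hs h)
    rw [if_pos h, if_pos h, if_neg hs, sub_zero]
  · have hs : G.src e ∈ W := by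
      by_contra hs
      exact hc (by rw [eq_iff_iff]; exact iff_of_false hs h)
    rw [if_neg h, if_neg h, if_pos hs, zero_sub]

lemma beta_formula (D : G.V → ℤ) (φ : G.E → ℤ)
    (heq : ∀ v, 2 * D v + G.divOf φ v = G.K v) (W : Finset G.V) :
    G.beta G.canPol D W =
      (∑ e ∈ Finset.univ.filter (fun e => G.crossing W e),
        (if G.tgt e ∈ W then 1 - (φ e : ℚ) else 1 + (φ e : ℚ))) / 2 := by
  have hD : ∀ v, (D v : ℚ) = (G.K v : ℚ) / 2 - (G.divOf φ v : ℚ) / 2 := by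
    intro v
    have := heq v
    have : (2 * D v : ℚ) + (G.divOf φ v : ℚ) = (G.K v : ℚ) := by exact_mod_cast congrArg (Int.cast : ℤ → ℚ) this
    linarith
  unfold WGraph.beta WGraph.canPol WGraph.delta
  rw [Finset.card_filter]
  have hsum : (∑ v ∈ W, (D v : ℚ)) - (∑ v ∈ W, (G.K v : ℚ) / 2) =
      - (∑ v ∈ W, (G.divOf φ v : ℚ)) / 2 := by
    rw [← Finset.sum_sub_distrib,
      Finset.sum_congr rfl
        (fun v _ => show (D v : ℚ) - (G.K v : ℚ) / 2 = -((G.divOf φ v : ℚ) / 2) from by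
          rw [hD v]; ring),
      Finset.sum_neg_distrib, ← Finset.sum_div, neg_div]
  rw [hsum]
  have hdiv : (∑ v ∈ W, (G.divOf φ v : ℚ)) =
      ∑ e ∈ Finset.univ.filter (fun e => G.crossing W e),
        (if G.tgt e ∈ W then (φ e : ℚ) else -(φ e : ℚ)) := by
    have := sum_divOf G φ W
    have h2 : ((∑ v ∈ W, G.divOf φ v : ℤ) : ℚ) =
        ((∑ e ∈ Finset.univ.filter (fun e => G.crossing W e),
          (if G.tgt e ∈ W then φ e else -φ e) : ℤ) : ℚ) := by rw [this]
    push_cast at h2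
    convert h2 using 2 <;> simp
  rw [hdiv]
  have hcard : ((∑ i : G.E, if G.crossing W i then (1:ℕ) else 0 : ℕ) : ℚ) =
      ∑ e ∈ Finset.univ.filter (fun e => G.crossing W e), (1 : ℚ) := by
    rw [Finset.sum_filter]
    push_cast
    rfl
  rw [hcard]
  have hC : (∑ e ∈ Finset.univ.filter (fun e => G.crossing W e),
        (if G.tgt e ∈ W then 1 - (φ e : ℚ) else 1 + (φ e : ℚ))) =
      (∑ e ∈ Finset.univ.filter (fun e => G.crossing W e), (1 : ℚ)) -
        ∑ e ∈ Finset.univ.filter (fun e => G.crossing W e),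
          (if G.tgt e ∈ W then (φ e : ℚ) else -(φ e : ℚ)) := by
    rw [← Finset.sum_sub_distrib]
    apply Finset.sum_congr rfl
    intro e _
    by_cases h : G.tgt e ∈ W <;> simp [h] <;> ring
  rw [hC]
  ring


/-- One nonnegative-flow step. -/
def stp (φ : G.E → ℤ) (a b : G.V) : Prop :=
  ∃ oe : G.OEdge, 0 ≤ G.flowVal φ oe ∧ G.osrc oe = a ∧ G.otgt oe = b

/-- Vertex list of a path starting at `a`. -/
def vl (a : G.V) (L : List G.OEdge) : List G.V := a :: L.map G.otgt

lemma vl_length (a : G.V) (L : List G.OEdge) : (vl G a L).length = L.length + 1 := by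
  simp [vl]

def GoodPath (φ : G.E → ℤ) (a : G.V) (L : List G.OEdge) : Prop :=
  (∀ oe ∈ L, 0 ≤ G.flowVal φ oe) ∧ (vl G a L).Nodup ∧
    ∀ i : Fin L.length,
      G.osrc (L.get i) = (vl G a L).get ⟨i.1, by rw [vl_length]; omega⟩

lemma exists_goodPath (φ : G.E → ℤ) {a b : G.V}
    (h : Relation.ReflTransGen (stp G φ) a b) :
    ∃ L, GoodPath G φ a L ∧
      (vl G a L).get ⟨L.length, by rw [vl_length]; omega⟩ = b := by
  induction h with
  | refl =>
    exact ⟨[], ⟨by simp, by simp [vl], fun i => absurd i.isLt (by simp)⟩, rfl⟩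
  | tail h1 h2 ih =>
    obtain ⟨L, ⟨hflow, hnd, hchain⟩, hlast⟩ := ih
    obtain ⟨oe, hnn, hsrc, htgt⟩ := h2
    rename_i c d
    by_cases hb : d ∈ vl G a L
    · -- truncate
      obtain ⟨⟨j, hj⟩, hjb⟩ := List.mem_iff_get.mp hb
      have hjle : j ≤ L.length := by
        have := hj; rw [vl_length] at this; omega
      have hlen : (L.take j).length = j := by simp; omega
      have e2 : ∀ (i : ℕ) (h1 : i < (L.take j).length + 1),
          (vl G a (L.take j)).get ⟨i, by rw [vl_length]; omega⟩ =
          (vl G a L).get ⟨i, by rw [hlen] at h1; rw [vl_length]; omega⟩ := by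
        intro i h1
        cases i with
        | zero => rfl
        | succ m => simp [vl, List.getElem_take]
      refine ⟨L.take j, ⟨?_, ?_, ?_⟩, ?_⟩
      · exact fun x hx => hflow x (List.take_subset j L hx)
      · have hv : vl G a (L.take j) = (vl G a L).take (j + 1) := by
          simp [vl, List.map_take]
        rw [hv]
        exact hnd.sublist (List.take_sublist _ _)
      · intro i
        have hi : i.1 < L.length := by
          have h := i.isLt; omega
        have e1 : (L.take j).get i = L.get ⟨i.1, hi⟩ := by
          simp [List.getElem_take]
        rw [e1, e2 i.1 (by omega)]
        exact hchain ⟨i.1, hi⟩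
      · have hfin : (⟨(L.take j).length, by rw [vl_length]; omega⟩ :
            Fin (vl G a (L.take j)).length) = ⟨j, by rw [vl_length, hlen]; omega⟩ :=
          Fin.ext (by simpa using hlen)
        rw [hfin, e2 j (by omega)]
        exact hjb
    · -- append
      have e2 : ∀ (i : ℕ) (h1 : i < L.length + 1),
          (vl G a (L ++ [oe])).get ⟨i, by rw [vl_length]; simp; omega⟩ =
          (vl G a L).get ⟨i, by rw [vl_length]; omega⟩ := by
        intro i h1
        cases i with
        | zero => rfl
        | succ m =>
          simp only [vl, List.get_eq_getElem, List.getElem_cons_succ,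
            List.getElem_map]
          congr 1
          exact List.getElem_append_left (by omega)
      refine ⟨L ++ [oe], ⟨?_, ?_, ?_⟩, ?_⟩
      · intro x hx
        rcases List.mem_append.mp hx with h | h
        · exact hflow x h
        · simp at h; subst h; exact hnn
      · have hv : vl G a (L ++ [oe]) = vl G a L ++ [d] := by
          simp [vl, htgt]
        rw [hv, List.nodup_append]
        exact ⟨hnd, List.nodup_singleton _, by
          intro x hx y hxd
          simp at hxd
          subst hxd
          rintro rfl
          exact hb hx⟩
      · intro i
        by_cases hi : i.1 < L.length
        · have e1 : (L ++ [oe]).get i = L.get ⟨i.1, hi⟩ := by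
            simp only [List.get_eq_getElem]
            exact List.getElem_append_left (by omega)
          rw [e1, e2 i.1 (by omega)]
          exact hchain ⟨i.1, hi⟩
        · have hieq : i.1 = L.length := by
            have := i.isLt; simp at this; omega
          have e1 : (L ++ [oe]).get i = oe := by
            simp only [List.get_eq_getElem]
            have : (L ++ [oe])[i.1]'(i.isLt) = (L ++ [oe])[L.length]'(by simp) := by
              simp [hieq]
            rw [this, List.getElem_concat_length]
            rfl
          have hfin : i = ⟨L.length, by simp⟩ := Fin.ext hieq
          rw [e1, hfin, e2 L.length (by omega)]
          rw [hlast, hsrc]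
      · have hfin : (⟨(L ++ [oe]).length, by rw [vl_length]; omega⟩ :
            Fin (vl G a (L ++ [oe])).length) = ⟨L.length + 1, by
              simp only [vl_length, List.length_append, List.length_cons,
                List.length_nil]; omega⟩ :=
          Fin.ext (by
            simp only [List.length_append, List.length_cons, List.length_nil])
        rw [hfin]
        simp only [vl, List.get_eq_getElem, List.getElem_cons_succ, List.getElem_map]
        rw [List.getElem_concat_length]
        · exact htgt
        · rfl


lemma get_idx_congr {α : Type*} (l : List α) {i j : ℕ} (h : i = j)
    (hi : i < l.length) (hj : j < l.length) : l.get ⟨i, hi⟩ = l.get ⟨j, hj⟩ := by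
  subst h; rfl

lemma osrc_eq_otgt_flip (x y : G.OEdge) (h1 : x.1 = y.1) (h2 : x.2 ≠ y.2) :
    G.osrc x = G.otgt y ∧ G.otgt x = G.osrc y ∧
      ∀ φ : G.E → ℤ, G.flowVal φ x = -G.flowVal φ y := by
  obtain ⟨e, b⟩ := x
  obtain ⟨e', b'⟩ := y
  simp only at h1
  subst h1
  cases b <;> cases b' <;> simp_all [WGraph.osrc, WGraph.otgt, WGraph.flowVal]

lemma no_return (φ : G.E → ℤ) (hacyc : G.Acyclic φ) (oe₀ : G.OEdge)
    (hpos : 0 < G.flowVal φ oe₀) :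
    ¬ Relation.ReflTransGen (stp G φ) (G.otgt oe₀) (G.osrc oe₀) := by
  intro h
  obtain ⟨L, ⟨hflow, hnd, hchain⟩, hlast⟩ := exists_goodPath G φ h
  set t := G.otgt oe₀ with ht
  set c : List G.OEdge := L ++ [oe₀] with hc
  have hclen : c.length = L.length + 1 := by simp [hc]
  have hcget_lt : ∀ (i : ℕ) (h' : i < L.length),
      c.get ⟨i, by omega⟩ = L.get ⟨i, h'⟩ := by
    intro i h'
    simp only [hc, List.get_eq_getElem]
    exact List.getElem_append_left (by omega)
  have hcget_last : c.get ⟨L.length, by omega⟩ = oe₀ := by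
    simp only [hc, List.get_eq_getElem]
    rw [List.getElem_concat_length]
    rfl
  have hosrc : ∀ (i : ℕ) (h' : i < c.length),
      G.osrc (c.get ⟨i, h'⟩) = (vl G t L).get ⟨i, by rw [vl_length]; omega⟩ := by
    intro i h'
    rcases Nat.lt_or_ge i L.length with hi | hi
    · rw [hcget_lt i hi]
      exact hchain ⟨i, hi⟩
    · have hieq : i = L.length := by omega
      subst hieq
      rw [hcget_last]
      exact hlast.symm
  have hotgt : ∀ (i : ℕ) (h' : i < L.length),
      G.otgt (c.get ⟨i, by omega⟩) = (vl G t L).get ⟨i + 1, by rw [vl_length]; omega⟩ := by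
    intro i h'
    rw [hcget_lt i h']
    simp [vl]
  have hotgt_last : G.otgt (c.get ⟨L.length, by omega⟩) =
      (vl G t L).get ⟨0, by rw [vl_length]; omega⟩ := by
    rw [hcget_last]
    rfl
  have hinj : ∀ (i j : ℕ) (hi : i < L.length + 1) (hj : j < L.length + 1),
      (vl G t L).get ⟨i, by rw [vl_length]; omega⟩ =
        (vl G t L).get ⟨j, by rw [vl_length]; omega⟩ → i = j := by
    intro i j hi hj hEq
    have := List.nodup_iff_injective_get.mp hnd hEq
    simpa using congrArg Fin.val this
  have hflownn : ∀ oe ∈ c, 0 ≤ G.flowVal φ oe := by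
    intro x hx
    rcases List.mem_append.mp hx with h' | h'
    · exact hflow x h'
    · simp at h'; subst h'; exact le_of_lt hpos
  have key : ∀ (i j : ℕ) (hi : i < c.length) (hj : j < c.length),
      (c.get ⟨i, hi⟩).1 = (c.get ⟨j, hj⟩).1 → i = j := by
    intro i j hi hj hxy
    by_contra hne
    by_cases hb : (c.get ⟨i, hi⟩).2 = (c.get ⟨j, hj⟩).2
    · have hxy' : c.get ⟨i, hi⟩ = c.get ⟨j, hj⟩ := Prod.ext hxy hb
      have := (hosrc i hi).symm.trans ((congrArg G.osrc hxy').trans (hosrc j hj))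
      exact hne (hinj i j (by omega) (by omega) this)
    · obtain ⟨hf1, hf2, hf3⟩ := osrc_eq_otgt_flip G _ _ hxy hb
      rcases Nat.lt_or_ge i L.length with hi' | hi'
      · rcases Nat.lt_or_ge j L.length with hj' | hj'
        · -- both in L: index contradiction
          have e1 : i = j + 1 := by
            apply hinj i (j+1) (by omega) (by omega)
            rw [← hosrc i hi, ← hotgt j hj', hf1]
          have e2 : j = i + 1 := by
            apply hinj j (i+1) (by omega) (by omega)
            rw [← hosrc j hj, ← hotgt i hi', ← hf2]
          omega
        · -- j is the last edge oe₀
          have hjeq : j = L.length := by omega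
          have hy : c.get ⟨j, hj⟩ = oe₀ := by
            rw [get_idx_congr c hjeq hj (by omega)]
            exact hcget_last
          have hnn := hflownn _ (List.get_mem c ⟨i, hi⟩)
          rw [hf3 φ, hy] at hnn
          omega
      · have hieq : i = L.length := by omega
        have hx : c.get ⟨i, hi⟩ = oe₀ := by
          rw [get_idx_congr c hieq hi (by omega)]
          exact hcget_last
        have hnn := hflownn _ (List.get_mem c ⟨j, hj⟩)
        have : G.flowVal φ (c.get ⟨j, hj⟩) = -G.flowVal φ (c.get ⟨i, hi⟩) := by
          rw [hf3 φ]; ring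
        rw [this, hx] at hnn
        omega
  apply hacyc
  refine ⟨c, ⟨?_, ?_, ?_, ?_⟩, hflownn, ⟨oe₀, by simp [hc], hpos⟩⟩
  · simp [hc]
  · rw [List.nodup_iff_injective_get]
    intro i j hEq
    simp only [List.get_eq_getElem, List.getElem_map] at hEq
    have hi : (i : ℕ) < c.length := by have := i.isLt; simpa using this
    have hj : (j : ℕ) < c.length := by have := j.isLt; simpa using this
    exact Fin.ext (key i.1 j.1 hi hj hEq)
  · have hmap : c.map G.osrc = vl G t L := by
      apply List.ext_get
      · rw [List.length_map, hclen, vl_length]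
      · intro n h1 h2
        simp only [List.get_eq_getElem, List.getElem_map]
        exact hosrc n (by simpa using h1)
    rw [hmap]
    exact hnd
  · intro i
    rcases Nat.lt_or_ge (i : ℕ) L.length with hi | hi
    · have hm : ((i : ℕ) + 1) % c.length = (i : ℕ) + 1 :=
        Nat.mod_eq_of_lt (by omega)
      have hstep : G.osrc (c.get ⟨((i : ℕ) + 1) % c.length, Nat.mod_lt _ i.pos⟩) =
          (vl G t L).get ⟨(i : ℕ) + 1, by rw [vl_length]; omega⟩ := by
        rw [get_idx_congr c hm (Nat.mod_lt _ i.pos) (by omega)]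
        exact hosrc ((i : ℕ) + 1) (by omega)
      rw [hstep]
      have : c.get i = c.get ⟨(i : ℕ), by omega⟩ := by
        apply get_idx_congr c rfl
      rw [this]
      exact hotgt (i : ℕ) hi
    · have hieq : (i : ℕ) = L.length := by have := i.isLt; omega
      have hm : ((i : ℕ) + 1) % c.length = 0 := by
        rw [hieq, hclen]
        simp
      have hstep : G.osrc (c.get ⟨((i : ℕ) + 1) % c.length, Nat.mod_lt _ i.pos⟩) =
          (vl G t L).get ⟨0, by rw [vl_length]; omega⟩ := by
        rw [get_idx_congr c hm (Nat.mod_lt _ i.pos) (by omega)]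
        exact hosrc 0 (by omega)
      rw [hstep]
      have : c.get i = c.get ⟨L.length, by omega⟩ := by
        apply get_idx_congr c hieq
      rw [this]
      exact hotgt_last

lemma flowVal_le_one (D : G.V → ℤ) (hss : G.Semistable G.canPol D) (φ : G.E → ℤ)
    (hacyc : G.Acyclic φ) (heq : ∀ v, 2 * D v + G.divOf φ v = G.K v)
    (oe : G.OEdge) : G.flowVal φ oe ≤ 1 := by
  by_contra hgt
  push_neg at hgt
  set t := G.otgt oe with ht
  set Z : Finset G.V :=
    Finset.univ.filter (fun v => Relation.ReflTransGen (stp G φ) t v) with hZ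
  have hstepZ : ∀ a b, a ∈ Z → stp G φ a b → b ∈ Z := by
    intro a b ha hab
    simp only [hZ, Finset.mem_filter] at ha ⊢
    exact ⟨Finset.mem_univ _, ha.2.tail hab⟩
  have htZ : t ∈ Z := by
    simp only [hZ, Finset.mem_filter]
    exact ⟨Finset.mem_univ _, Relation.ReflTransGen.refl⟩
  have hsZ : G.osrc oe ∉ Z := by
    simp only [hZ, Finset.mem_filter]
    rintro ⟨-, hreach⟩
    exact no_return G φ hacyc oe (by omega) hreach
  have hZuniv : Z ≠ Finset.univ := fun h' => hsZ (h' ▸ Finset.mem_univ _)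
  have hβ := hss Z hZuniv
  rw [beta_formula G D φ heq Z] at hβ
  have hterm : ∀ e ∈ Finset.univ.filter (fun e => G.crossing Z e),
      (if G.tgt e ∈ Z then 1 - (φ e : ℚ) else 1 + (φ e : ℚ)) ≤
      (if e = oe.1 then (-1 : ℚ) else 0) := by
    intro e he
    simp only [Finset.mem_filter] at he
    have hcr := he.2
    by_cases htgtZ : G.tgt e ∈ Z
    · have hsrcZ : G.src e ∉ Z := by
        intro hs
        exact hcr (by rw [eq_iff_iff]; exact iff_of_true hs htgtZ)
      have hphi : 1 ≤ φ e := by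
        by_contra hp
        push_neg at hp
        have : G.src e ∈ Z := hstepZ (G.tgt e) (G.src e) htgtZ
          ⟨(e, false), by simp [WGraph.flowVal]; omega, by simp [WGraph.osrc],
            by simp [WGraph.otgt]⟩
        exact hsrcZ this
      rw [if_pos htgtZ]
      by_cases heoe : e = oe.1
      · rw [if_pos heoe]
        have hb : oe.2 = true := by
          by_contra hb2
          have hb2' : oe.2 = false := by
            cases h' : oe.2
            · rfl
            · exact absurd h' hb2
          have : G.osrc oe = G.tgt e := by
            simp [WGraph.osrc, hb2', heoe]
          rw [this] at hsZ
          exact hsZ htgtZ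
        have hfv : G.flowVal φ oe = φ e := by
          simp [WGraph.flowVal, hb, heoe]
        have : 2 ≤ φ e := by omega
        have : (2 : ℚ) ≤ (φ e : ℚ) := by exact_mod_cast this
        linarith
      · rw [if_neg heoe]
        have : (1 : ℚ) ≤ (φ e : ℚ) := by exact_mod_cast hphi
        linarith
    · have hsrcZ : G.src e ∈ Z := by
        by_contra hs
        exact hcr (by rw [eq_iff_iff]; exact iff_of_false hs htgtZ)
      have hphi : φ e ≤ -1 := by
        by_contra hp
        push_neg at hp
        have : G.tgt e ∈ Z := hstepZ (G.src e) (G.tgt e) hsrcZ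
          ⟨(e, true), by simp [WGraph.flowVal]; omega, by simp [WGraph.osrc],
            by simp [WGraph.otgt]⟩
        exact htgtZ this
      rw [if_neg htgtZ]
      by_cases heoe : e = oe.1
      · rw [if_pos heoe]
        have hb : oe.2 = false := by
          cases h' : oe.2
          · rfl
          · exfalso
            have h3 : G.otgt oe = G.tgt e := by simp [WGraph.otgt, h', heoe]
            exact htgtZ (by rw [← h3, ← ht]; exact htZ)
        have hfv : G.flowVal φ oe = -φ e := by
          simp [WGraph.flowVal, hb, heoe]
        have : φ e ≤ -2 := by omega
        have : (φ e : ℚ) ≤ -2 := by exact_mod_cast this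
        linarith
      · rw [if_neg heoe]
        have : (φ e : ℚ) ≤ -1 := by exact_mod_cast hphi
        linarith
  have hmem : oe.1 ∈ Finset.univ.filter (fun e => G.crossing Z e) := by
    simp only [Finset.mem_filter]
    refine ⟨Finset.mem_univ _, ?_⟩
    intro hEq
    rw [eq_iff_iff] at hEq
    cases h' : oe.2
    · have h1 : G.src oe.1 = t := by rw [ht]; simp [WGraph.otgt, h']
      have h2 : G.tgt oe.1 = G.osrc oe := by simp [WGraph.osrc, h']
      rw [h1, h2] at hEq
      exact hsZ (hEq.mp htZ)
    · have h1 : G.tgt oe.1 = t := by rw [ht]; simp [WGraph.otgt, h']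
      have h2 : G.src oe.1 = G.osrc oe := by simp [WGraph.osrc, h']
      rw [h2, h1] at hEq
      exact hsZ (hEq.mpr htZ)
  have hsum := Finset.sum_le_sum hterm
  have hsum2 : (∑ e ∈ Finset.univ.filter (fun e => G.crossing Z e),
      (if e = oe.1 then (-1 : ℚ) else 0)) = -1 := by
    rw [Finset.sum_ite_eq' (Finset.univ.filter (fun e => G.crossing Z e)) oe.1
      (fun _ => (-1 : ℚ))]
    rw [if_pos hmem]
  rw [hsum2] at hsum
  linarith

end Stmt3Aux



/-- For a semistable `D` with acyclic flow `φ` satisfying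
`2D + Div(φ) = K_Γ`: `β_D(V) = 0` iff `φ(e) = 1` for every oriented edge `e`
from the complement of `V` into `V`. -/
theorem stmt3 (G : WGraph) (hconn : G.Connected) (D : G.V → ℤ)
    (hss : G.Semistable G.canPol D) (φ : G.E → ℤ) (hacyc : G.Acyclic φ)
    (heq : ∀ v, 2 * D v + G.divOf φ v = G.K v) (W : Finset G.V) :
    G.beta G.canPol D W = 0 ↔
      ∀ oe : G.OEdge, G.osrc oe ∉ W → G.otgt oe ∈ W → G.flowVal φ oe = 1 := by
  classical
  rw [Stmt3Aux.beta_formula G D φ heq W]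
  have hfl := Stmt3Aux.flowVal_le_one G D hss φ hacyc heq
  constructor
  · intro h0 oe hos hot
    have hS : (∑ e ∈ Finset.univ.filter (fun e => G.crossing W e),
        (if G.tgt e ∈ W then 1 - (φ e : ℚ) else 1 + (φ e : ℚ))) = 0 := by linarith
    have hnn : ∀ e ∈ Finset.univ.filter (fun e => G.crossing W e),
        0 ≤ (if G.tgt e ∈ W then 1 - (φ e : ℚ) else 1 + (φ e : ℚ)) := by
      intro e _
      by_cases h : G.tgt e ∈ W
      · rw [if_pos h]
        have h1 := hfl (e, true)
        have h2 : φ e ≤ 1 := by simpa [WGraph.flowVal] using h1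
        have h3 : (φ e : ℚ) ≤ 1 := by exact_mod_cast h2
        linarith
      · rw [if_neg h]
        have h1 := hfl (e, false)
        have h2 : -φ e ≤ 1 := by simpa [WGraph.flowVal] using h1
        have h3 : (-1 : ℚ) ≤ (φ e : ℚ) := by exact_mod_cast (by omega : (-1:ℤ) ≤ φ e)
        linarith
    have hall := (Finset.sum_eq_zero_iff_of_nonneg hnn).mp hS
    obtain ⟨e, b⟩ := oe
    cases b
    · -- (e, false): osrc = tgt e ∉ W, otgt = src e ∈ W
      have hos' : G.tgt e ∉ W := by simpa [WGraph.osrc] using hos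
      have hot' : G.src e ∈ W := by simpa [WGraph.otgt] using hot
      have hmem : e ∈ Finset.univ.filter (fun e => G.crossing W e) := by
        simp only [Finset.mem_filter]
        refine ⟨Finset.mem_univ _, ?_⟩
        intro hEq
        rw [eq_iff_iff] at hEq
        exact hos' (hEq.mp hot')
      have h0e := hall e hmem
      rw [if_neg hos'] at h0e
      have h1 : (φ e : ℚ) = -1 := by linarith
      have hz : φ e = -1 := by exact_mod_cast h1
      simp [WGraph.flowVal, hz]
    · have hos' : G.src e ∉ W := by simpa [WGraph.osrc] using hos
      have hot' : G.tgt e ∈ W := by simpa [WGraph.otgt] using hot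
      have hmem : e ∈ Finset.univ.filter (fun e => G.crossing W e) := by
        simp only [Finset.mem_filter]
        refine ⟨Finset.mem_univ _, ?_⟩
        intro hEq
        rw [eq_iff_iff] at hEq
        exact hos' (hEq.mpr hot')
      have h0e := hall e hmem
      rw [if_pos hot'] at h0e
      have h1 : (φ e : ℚ) = 1 := by linarith
      have hz : φ e = 1 := by exact_mod_cast h1
      simp [WGraph.flowVal, hz]
  · intro hflow
    have hS : (∑ e ∈ Finset.univ.filter (fun e => G.crossing W e),
        (if G.tgt e ∈ W then 1 - (φ e : ℚ) else 1 + (φ e : ℚ))) = 0 := by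
      apply Finset.sum_eq_zero
      intro e he
      simp only [Finset.mem_filter] at he
      have hcr := he.2
      by_cases h : G.tgt e ∈ W
      · have hs : G.src e ∉ W := fun hs =>
          hcr (by rw [eq_iff_iff]; exact iff_of_true hs h)
        have h1 := hflow (e, true) (by simpa [WGraph.osrc] using hs)
          (by simpa [WGraph.otgt] using h)
        have hz : φ e = 1 := by simpa [WGraph.flowVal] using h1
        rw [if_pos h, hz]
        norm_num
      · have hs : G.src e ∈ W := by
          by_contra hs
          exact hcr (by rw [eq_iff_iff]; exact iff_of_false hs h)
        have h1 := hflow (e, false) (by simpa [WGraph.osrc] using h)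
          (by simpa [WGraph.otgt] using hs)
        have hz : φ e = -1 := by
          have h2 : -φ e = 1 := by simpa [WGraph.flowVal] using h1
          omega
        rw [if_neg h, hz]
        norm_num
    rw [hS]
    norm_num
end
end

section
/- Let Γ be a connected weighted graph of genus g and μ the canonical polarization of degree g-1. If D is a μ-semistable divisor on Γ, then there is at most one acyclic flow φ on Γ such that 2D + Div(φ) = K_Γ. -/
/-! A common framework for weighted multigraphs, divisors, flows,
subdivisions, pseudo-divisors and specializations, following
"The moduli space of quasistable spin curves". -/

noncomputable section

namespace WGraph

attribute [local instance] Classical.propDecidable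

variable (G : WGraph)

end WGraph

attribute [local instance] Classical.propDecidable


namespace Stmt4Aux
open Relation List

variable {G : WGraph}

/-- One nonnegative-flow step. -/
def Step (G : WGraph) (φ : G.E → ℤ) (u v : G.V) : Prop :=
  ∃ oe : G.OEdge, 0 ≤ G.flowVal φ oe ∧ G.osrc oe = u ∧ G.otgt oe = v

/-- Adjacency of consecutive oriented edges. -/
abbrev Rel (G : WGraph) (x y : G.OEdge) : Prop := G.otgt x = G.osrc y

lemma flowVal_not (φ : G.E → ℤ) (e : G.E) (b : Bool) :
    G.flowVal φ (e, !b) = -G.flowVal φ (e, b) := by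
  cases b <;> simp [WGraph.flowVal]

lemma osrc_not (e : G.E) (b : Bool) : G.osrc (e, !b) = G.otgt (e, b) := by
  cases b <;> simp [WGraph.osrc, WGraph.otgt]

lemma otgt_not (e : G.E) (b : Bool) : G.otgt (e, !b) = G.osrc (e, b) := by
  cases b <;> simp [WGraph.osrc, WGraph.otgt]

lemma cyc_adj (L : List G.OEdge) (hne : L ≠ []) (hch : L.IsChain (Rel G))
    (hwrap : G.otgt (L.getLast hne) = G.osrc (L.head hne)) :
    ∀ i : Fin L.length,
      G.otgt (L.get i) = G.osrc (L.get ⟨((i : ℕ) + 1) % L.length, Nat.mod_lt _ i.pos⟩) := by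
  intro i
  rw [List.get_eq_getElem, List.get_eq_getElem]
  rcases Nat.lt_or_ge ((i : ℕ) + 1) L.length with h | h
  · have h2 := List.isChain_iff_getElem.mp hch (i : ℕ) (by omega)
    have hmod : ((i : ℕ) + 1) % L.length = (i : ℕ) + 1 := Nat.mod_eq_of_lt h
    simp only [hmod]
    exact h2
  · have hlen : (i : ℕ) + 1 = L.length := by have := i.isLt; omega
    have hmod : ((i : ℕ) + 1) % L.length = 0 := by rw [hlen, Nat.mod_self]
    have hi : (i : ℕ) = L.length - 1 := by omega
    simp only [hmod]
    simp only [hi]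
    simp only [List.getLast_eq_getElem, List.head_eq_getElem] at hwrap
    exact hwrap

lemma osrc_getElem_inj {L : List G.OEdge} (hv : (L.map G.osrc).Nodup)
    {i j : ℕ} (hi : i < L.length) (hj : j < L.length)
    (h : G.osrc (L[i]'hi) = G.osrc (L[j]'hj)) : i = j := by
  have hi' : i < (L.map G.osrc).length := by simpa using hi
  have hj' : j < (L.map G.osrc).length := by simpa using hj
  have hget : (L.map G.osrc)[i]'hi' = (L.map G.osrc)[j]'hj' := by
    rw [List.getElem_map, List.getElem_map]
    exact h
  exact (List.Nodup.getElem_inj_iff hv).mp hget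

lemma edges_nodup (L : List G.OEdge)
    (hadj : ∀ i : Fin L.length,
      G.otgt (L.get i) = G.osrc (L.get ⟨((i : ℕ) + 1) % L.length, Nat.mod_lt _ i.pos⟩))
    (hv : (L.map G.osrc).Nodup)
    (hpair : ∀ (e : G.E) (b : Bool), L ≠ [(e, b), (e, !b)]) :
    (L.map Prod.fst).Nodup := by
  have hcn : L.Nodup := hv.of_map
  have hadj' : ∀ (i : ℕ) (h : i < L.length) (h2 : (i+1) % L.length < L.length),
      G.otgt (L[i]'h) = G.osrc (L[(i+1) % L.length]'h2) := by
    intro i h h2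
    have := hadj ⟨i, h⟩
    simpa [List.get_eq_getElem] using this
  rw [List.nodup_iff_injective_get]
  intro i' j' hget
  have hi : (i' : ℕ) < L.length := by have := i'.isLt; simpa using this
  have hj : (j' : ℕ) < L.length := by have := j'.isLt; simpa using this
  have hfst : (L[(i' : ℕ)]'hi).1 = (L[(j' : ℕ)]'hj).1 := by
    have h1 : (L.map Prod.fst).get i' = (L[(i' : ℕ)]'hi).1 := by
      rw [List.get_eq_getElem, List.getElem_map]
    have h2 : (L.map Prod.fst).get j' = (L[(j' : ℕ)]'hj).1 := by
      rw [List.get_eq_getElem, List.getElem_map]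
    rw [h1, h2] at hget
    exact hget
  by_cases heq : L[(i' : ℕ)]'hi = L[(j' : ℕ)]'hj
  · exact Fin.ext ((List.Nodup.getElem_inj_iff hcn).mp heq)
  exfalso
  set x := L[(i' : ℕ)]'hi with hxdef
  set y := L[(j' : ℕ)]'hj with hydef
  have hsnd : y.2 = !x.2 := by
    have hne2 : y.2 ≠ x.2 := by
      intro h2
      exact heq (Prod.ext hfst h2.symm)
    cases h1 : x.2 <;> cases h2 : y.2 <;> simp_all
  have hy : y = (x.1, !x.2) := by
    have := Prod.mk.eta (p := y)
    rw [← this, hfst.symm, hsnd]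
  have hx : (x.1, x.2) = x := Prod.mk.eta
  have e1 : G.osrc y = G.otgt x := by rw [hy, ← hx, osrc_not]
  have e2 : G.otgt y = G.osrc x := by rw [hy, ← hx, otgt_not]
  have hn0 : 0 < L.length := by omega
  have hji : (j' : ℕ) = ((i' : ℕ) + 1) % L.length := by
    apply osrc_getElem_inj hv hj (Nat.mod_lt _ hn0)
    rw [e1, hxdef]
    exact hadj' _ hi _
  have hij : (i' : ℕ) = ((j' : ℕ) + 1) % L.length := by
    apply osrc_getElem_inj hv hi (Nat.mod_lt _ hn0)
    rw [← hxdef, ← e2, hydef]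
    exact hadj' _ hj _
  have hii : (i' : ℕ) = (((i' : ℕ) + 1) % L.length + 1) % L.length := by
    rw [← hji]; exact hij
  rw [Nat.mod_add_mod] at hii
  have hlen1 : L.length ≠ 1 := by
    intro h1
    apply heq
    rw [hxdef, hydef]
    simp only [show (i' : ℕ) = 0 by omega, show (j' : ℕ) = 0 by omega]
  have hn2 : L.length = 2 := by
    rcases Nat.lt_or_ge ((i' : ℕ) + 2) L.length with h | h
    · rw [Nat.mod_eq_of_lt h] at hii; omega
    · have hlt : (i' : ℕ) + 2 - L.length < L.length := by omega
      rw [Nat.mod_eq_sub_mod h, Nat.mod_eq_of_lt hlt] at hii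
      omega
  -- now length 2, positions 0 and 1 in some order
  have hiv : (i' : ℕ) = 0 ∨ (i' : ℕ) = 1 := by omega
  have hjv : (j' : ℕ) ≠ (i' : ℕ) := by
    intro h
    apply heq
    rw [hxdef, hydef]
    simp only [h]
  rcases L with _ | ⟨u, c1⟩
  · simp at hn2
  rcases c1 with _ | ⟨w, c2⟩
  · simp at hn2
  rcases c2 with _ | ⟨z, c3⟩
  swap
  · simp at hn2
  -- L = [u, w]
  rcases hiv with h0 | h1
  · have hj1 : (j' : ℕ) = 1 := by omega
    have hxu : x = u := by rw [hxdef]; simp [h0]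
    have hyw : y = w := by rw [hydef]; simp [hj1]
    apply hpair x.1 x.2
    rw [← hxu, ← hyw, hy, ← hx]
  · have hj0 : (j' : ℕ) = 0 := by omega
    have hxu : x = w := by rw [hxdef]; simp [h1]
    have hyw : y = u := by rw [hydef]; simp [hj0]
    apply hpair x.1 (!x.2)
    rw [Bool.not_not, ← hxu, ← hyw, hy, ← hx]

lemma exists_simple_path (φ : G.E → ℤ) {b a : G.V}
    (h : Relation.ReflTransGen (Step G φ) b a) :
    ∃ p : List G.OEdge,
      (∀ oe ∈ p, 0 ≤ G.flowVal φ oe) ∧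
      (p.map G.osrc).Nodup ∧ a ∉ p.map G.osrc ∧
      p.IsChain (Rel G) ∧
      (p = [] → b = a) ∧
      ∀ hp : p ≠ [], G.osrc (p.head hp) = b ∧ G.otgt (p.getLast hp) = a := by
  induction h with
  | refl =>
      exact ⟨[], by simp, by simp, by simp, by simp, fun _ => rfl,
        fun hp => absurd rfl hp⟩
  | @tail c a hbc hca ih =>
      obtain ⟨p, hval, hnd, hcnot, hch, hnil, hends⟩ := ih
      obtain ⟨oe, hoe0, hoesrc, hoetgt⟩ := hca
      by_cases hac : a = c
      · exact hac ▸ ⟨p, hval, hnd, hcnot, hch, hnil, hends⟩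
      by_cases hmem : a ∈ p.map G.osrc
      · -- truncate at the index where a occurs as a source
        have hpne : p ≠ [] := by
          intro h0; rw [h0] at hmem; simp at hmem
        obtain ⟨k, hk', hka'⟩ := List.getElem_of_mem hmem
        have hk : k < p.length := by simpa using hk'
        have hka : G.osrc (p[k]'hk) = a := by
          rw [List.getElem_map] at hka'; exact hka'
        refine ⟨p.take k, ?_, ?_, ?_, hch.take k, ?_, ?_⟩
        · exact fun oe' h' => hval oe' ((List.take_sublist k p).mem h')
        · rw [List.map_take]
          exact List.Nodup.sublist (List.take_sublist _ _) hnd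
        · rw [List.map_take]
          intro hmem'
          obtain ⟨l, hl', hla⟩ := List.getElem_of_mem hmem'
          have hl2 : l < k := by
            have := hl'; simp only [List.length_take] at this; omega
          have hlm : l < (p.map G.osrc).length := by simp; omega
          have hkm : k < (p.map G.osrc).length := by simpa using hk
          have hla2 : (p.map G.osrc)[l]'hlm = (p.map G.osrc)[k]'hkm := by
            rw [List.getElem_take] at hla
            rw [hla, hka']
          have := (List.Nodup.getElem_inj_iff hnd).mp hla2
          omega
        · intro h0
          rcases List.take_eq_nil_iff.mp h0 with h0 | h0
          · subst h0
            have hhead := (hends hpne).1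
            rw [List.head_eq_getElem] at hhead
            rw [← hhead]
            exact hka
          · exact absurd h0 hpne
        · intro hp'
          have hk0 : k ≠ 0 := by
            intro h0
            apply hp'
            rw [h0, List.take_zero]
          constructor
          · have h1 : (p.take k).head hp' = p.head hpne := by
              rw [List.head_eq_getElem, List.head_eq_getElem, List.getElem_take]
            rw [h1]; exact (hends hpne).1
          · have hl : (p.take k).getLast hp' = p[k-1]'(by omega) := by
              rw [List.getLast_eq_getElem]
              rw [List.getElem_take]
              simp only [List.length_take, Nat.min_eq_left hk.le]
            rw [hl]
            have h3 := List.isChain_iff_getElem.mp hch (k-1) (by omega)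
            have h3' : G.otgt (p[k-1]'(by omega)) = G.osrc (p[k-1+1]'(by omega)) := h3
            rw [h3']
            simp only [show k - 1 + 1 = k from by omega]
            exact hka
      · -- append a fresh step
        refine ⟨p ++ [oe], ?_, ?_, ?_, ?_, by simp, ?_⟩
        · intro oe' h'
          rcases List.mem_append.mp h' with h' | h'
          · exact hval oe' h'
          · simp at h'; subst h'; exact hoe0
        · rw [List.map_append]
          refine List.Nodup.append hnd (by simp) ?_
          intro x hx hx'
          simp [hoesrc] at hx'
          subst hx'
          exact hcnot hx
        · rw [List.map_append]
          intro h'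
          rcases List.mem_append.mp h' with h' | h'
          · exact hmem h'
          · simp [hoesrc] at h'
            exact hac h'
        · rw [List.isChain_append]
          refine ⟨hch, List.isChain_singleton _, ?_⟩
          intro x hx y hy
          simp at hy
          subst hy
          have hpne : p ≠ [] := by
            intro h0; rw [h0] at hx; simp at hx
          rw [List.getLast?_eq_getLast hpne] at hx
          simp at hx
          subst hx
          show G.otgt (p.getLast hpne) = G.osrc oe
          rw [(hends hpne).2, hoesrc]
        · intro hp'
          constructor
          · rcases p with _ | ⟨x, t⟩
            · show G.osrc oe = b
              rw [hoesrc]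
              exact (hnil rfl).symm
            · show G.osrc x = b
              exact (hends (by simp)).1
          · have h2 : (p ++ [oe]).getLast hp' = oe := by
              simp [List.getLast_append]
            rw [h2]
            exact hoetgt

lemma not_reach_back (φ : G.E → ℤ) (hA : G.Acyclic φ) (oe : G.OEdge)
    (h1 : 1 ≤ G.flowVal φ oe) :
    ¬ Relation.ReflTransGen (Step G φ) (G.otgt oe) (G.osrc oe) := by
  intro hr
  obtain ⟨p, hval, hnd, hanot, hch, hnil, hends⟩ := exists_simple_path φ hr
  have hcne : (oe :: p) ≠ [] := by simp
  have hchain : (oe :: p).IsChain (Rel G) := by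
    cases p with
    | nil => simp
    | cons x t =>
      rw [List.isChain_cons_cons]
      exact ⟨((hends (by simp)).1).symm, hch⟩
  have hwrap : G.otgt ((oe :: p).getLast hcne) = G.osrc ((oe :: p).head hcne) := by
    cases p with
    | nil =>
      show G.otgt oe = G.osrc oe
      exact hnil rfl
    | cons x t =>
      rw [List.getLast_cons (by simp : (x :: t) ≠ [])]
      show G.otgt ((x :: t).getLast _) = G.osrc oe
      exact (hends (by simp)).2
  have hadj := cyc_adj (oe :: p) hcne hchain hwrap
  have hvnd : ((oe :: p).map G.osrc).Nodup := by
    rw [List.map_cons, List.nodup_cons]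
    exact ⟨hanot, hnd⟩
  have hpair : ∀ (e : G.E) (bb : Bool), (oe :: p) ≠ [(e, bb), (e, !bb)] := by
    intro e bb hcontra
    have hoe : oe = (e, bb) := by
      have := congrArg (fun l => l.head? ) hcontra
      simpa using this
    have hp2 : p = [(e, !bb)] := by
      have := congrArg List.tail hcontra
      simpa using this
    have hv := hval (e, !bb) (by rw [hp2]; simp)
    rw [flowVal_not, ← hoe] at hv
    omega
  have hend : ((oe :: p).map Prod.fst).Nodup := edges_nodup _ hadj hvnd hpair
  apply hA
  refine ⟨oe :: p, ⟨hcne, hend, hvnd, hadj⟩, ?_, ⟨oe, by simp, by omega⟩⟩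
  intro oe' h'
  rcases List.mem_cons.mp h' with h' | h'
  · subst h'; omega
  · exact hval oe' h'

lemma into_sum (ψ : G.E → ℤ) (v : G.V) :
    ∑ oe ∈ Finset.univ.filter (fun oe : G.OEdge => G.otgt oe = v), G.flowVal ψ oe
      = G.divOf ψ v := by
  classical
  rw [Finset.sum_filter]
  rw [Fintype.sum_prod_type]
  have h1 : ∀ e : G.E, (∑ bb : Bool, if G.otgt (e, bb) = v then G.flowVal ψ (e, bb) else 0)
      = (if G.tgt e = v then ψ e else 0) + (if G.src e = v then -ψ e else 0) := by
    intro e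
    rw [Fintype.sum_bool]
    simp [WGraph.otgt, WGraph.flowVal]
  rw [Finset.sum_congr rfl (fun e _ => h1 e)]
  rw [Finset.sum_add_distrib]
  unfold WGraph.divOf
  have h2 : ∑ e : G.E, (if G.src e = v then -ψ e else 0)
      = -∑ e : G.E, (if G.src e = v then ψ e else 0) := by
    rw [← Finset.sum_neg_distrib]
    exact Finset.sum_congr rfl (fun e _ => by split <;> simp)
  rw [h2]
  ring

lemma exists_out (ψ : G.E → ℤ) (hdiv : ∀ v, G.divOf ψ v = 0) (v : G.V)
    (hin : ∃ oe : G.OEdge, G.otgt oe = v ∧ 1 ≤ G.flowVal ψ oe) :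
    ∃ oe : G.OEdge, G.osrc oe = v ∧ 1 ≤ G.flowVal ψ oe := by
  classical
  by_contra hno
  push_neg at hno
  obtain ⟨oe, hoet, hoev⟩ := hin
  have hnn : ∀ oe' ∈ Finset.univ.filter (fun oe' : G.OEdge => G.otgt oe' = v),
      0 ≤ G.flowVal ψ oe' := by
    intro oe' h'
    have ht' : G.otgt oe' = v := (Finset.mem_filter.mp h').2
    have hs : G.osrc (oe'.1, !oe'.2) = v := by
      rw [osrc_not]
      rw [show (oe'.1, oe'.2) = oe' from Prod.mk.eta]
      exact ht'
    have := hno (oe'.1, !oe'.2) hs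
    rw [flowVal_not] at this
    rw [show (oe'.1, oe'.2) = oe' from Prod.mk.eta] at this
    omega
  have hmem : oe ∈ Finset.univ.filter (fun oe' : G.OEdge => G.otgt oe' = v) := by
    simp [hoet]
  have h1 := Finset.single_le_sum hnn hmem
  rw [into_sum, hdiv] at h1
  omega

lemma grow (ψ : G.E → ℤ) (hdiv : ∀ v, G.divOf ψ v = 0) :
    ∀ (k : ℕ) (p : List G.OEdge) (hp : p ≠ []),
      p.IsChain (Rel G) → (∀ oe ∈ p, 1 ≤ G.flowVal ψ oe) → (p.map G.osrc).Nodup →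
      Fintype.card G.V + 1 - p.length ≤ k →
      ∃ c, G.IsOrientedCycle c ∧ ∀ oe ∈ c, 1 ≤ G.flowVal ψ oe := by
  intro k
  induction k with
  | zero =>
      intro p hp hch hval hnd hk
      exfalso
      have h1 : (p.map G.osrc).length ≤ Fintype.card G.V := hnd.length_le_card
      rw [List.length_map] at h1
      omega
  | succ k ih =>
      intro p hp hch hval hnd hk
      by_cases hmem : G.otgt (p.getLast hp) ∈ p.map G.osrc
      · -- close up a cycle
        obtain ⟨idx, hidx', hidxa'⟩ := List.getElem_of_mem hmem
        have hidx : idx < p.length := by simpa using hidx'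
        have hidxa : G.osrc (p[idx]'hidx) = G.otgt (p.getLast hp) := by
          rw [List.getElem_map] at hidxa'; exact hidxa'
        set c := p.drop idx with hcdef
        have hcne : c ≠ [] := by
          rw [hcdef]
          intro h0
          have := List.length_drop (i := idx) (l := p)
          rw [h0] at this
          simp at this
          omega
        have hcvals : ∀ oe ∈ c, 1 ≤ G.flowVal ψ oe := by
          intro oe h'
          exact hval oe (List.mem_of_mem_drop h')
        have hchd : c.IsChain (Rel G) := hch.drop idx
        have hhead : c.head hcne = p[idx]'hidx := by
          have h0 : 0 < c.length := List.length_pos_iff.mpr hcne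
          rw [List.head_eq_getElem]
          have hgd := List.getElem_drop (xs := p) (i := idx) (j := 0)
            (h := by simpa [hcdef] using h0)
          simpa [hcdef] using hgd
        have hlast : c.getLast hcne = p.getLast hp := List.getLast_drop hcne
        have hwrap : G.otgt (c.getLast hcne) = G.osrc (c.head hcne) := by
          rw [hlast, hhead]
          exact hidxa.symm
        have hadj := cyc_adj c hcne hchd hwrap
        have hvnd : (c.map G.osrc).Nodup := by
          rw [hcdef, List.map_drop]
          exact List.Nodup.sublist (List.drop_sublist _ _) hnd
        have hpair : ∀ (e : G.E) (bb : Bool), c ≠ [(e, bb), (e, !bb)] := by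
          intro e bb hcontra
          have hv1 := hcvals (e, bb) (by rw [hcontra]; simp)
          have hv2 := hcvals (e, !bb) (by rw [hcontra]; simp)
          rw [flowVal_not] at hv2
          omega
        exact ⟨c, ⟨hcne, edges_nodup c hadj hvnd hpair, hvnd, hadj⟩, hcvals⟩
      · -- extend the path
        obtain ⟨oe', hoes, hoev⟩ := exists_out ψ hdiv (G.otgt (p.getLast hp))
          ⟨p.getLast hp, rfl, hval _ (List.getLast_mem hp)⟩
        have hlen : p.length ≤ Fintype.card G.V := by
          have h1 : (p.map G.osrc).length ≤ Fintype.card G.V := hnd.length_le_card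
          rw [List.length_map] at h1
          exact h1
        apply ih (p ++ [oe']) (by simp)
        · rw [List.isChain_append]
          refine ⟨hch, List.isChain_singleton _, ?_⟩
          intro x hx y hy
          simp at hy
          subst hy
          rw [List.getLast?_eq_getLast hp] at hx
          simp at hx
          subst hx
          exact hoes.symm
        · intro oe'' h''
          rcases List.mem_append.mp h'' with h'' | h''
          · exact hval oe'' h''
          · simp at h''; subst h''; exact hoev
        · rw [List.map_append]
          refine List.Nodup.append hnd (by simp) ?_
          intro x hx hx'
          simp [hoes] at hx'
          subst hx'
          exact hmem hx
        · simp only [List.length_append, List.length_singleton]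
          omega

lemma exists_pos_cycle (ψ : G.E → ℤ) (hdiv : ∀ v, G.divOf ψ v = 0)
    (e₀ : G.E) (hne : ψ e₀ ≠ 0) :
    ∃ c, G.IsOrientedCycle c ∧ ∀ oe ∈ c, 1 ≤ G.flowVal ψ oe := by
  have hoe : ∃ oe : G.OEdge, 1 ≤ G.flowVal ψ oe := by
    rcases lt_or_gt_of_ne hne with h | h
    · exact ⟨(e₀, false), by simp [WGraph.flowVal]; omega⟩
    · exact ⟨(e₀, true), by simp [WGraph.flowVal]; omega⟩
  obtain ⟨oe, hoev⟩ := hoe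
  exact grow ψ hdiv (Fintype.card G.V + 1) [oe] (by simp) (by simp)
    (by simpa using hoev) (by simp) (by simp)

lemma cycle_reenter (L : List G.OEdge) (hcyc : G.IsOrientedCycle L) (R : G.V → Prop)
    (oe₀ : G.OEdge) (h₀ : oe₀ ∈ L) (hin : R (G.osrc oe₀)) (hout : ¬ R (G.otgt oe₀)) :
    ∃ oe ∈ L, ¬ R (G.osrc oe) ∧ R (G.otgt oe) := by
  classical
  obtain ⟨hne, hE, hV, hadj⟩ := hcyc
  have hn : 0 < L.length := List.length_pos_iff.mpr hne
  have hadj' : ∀ (i : ℕ) (h : i < L.length) (h2 : (i+1) % L.length < L.length),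
      G.otgt (L[i]'h) = G.osrc (L[(i+1) % L.length]'h2) := by
    intro i h h2
    have := hadj ⟨i, h⟩
    simpa [List.get_eq_getElem] using this
  obtain ⟨j, hj, hjeq⟩ := List.getElem_of_mem h₀
  have hex : ∃ k, R (G.osrc (L[(j + 1 + k) % L.length]'(Nat.mod_lt _ hn))) := by
    refine ⟨L.length - 1, ?_⟩
    have hidx : (j + 1 + (L.length - 1)) % L.length = j := by
      have h1 : j + 1 + (L.length - 1) = j + L.length := by omega
      rw [h1, Nat.add_mod_right, Nat.mod_eq_of_lt hj]
    simp only [hidx]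
    rw [hjeq]
    exact hin
  set k₀ := Nat.find hex with hk₀def
  have hk₀ := Nat.find_spec hex
  have hk₀pos : 0 < k₀ := by
    rcases Nat.eq_zero_or_pos k₀ with h0 | h
    · exfalso
      rw [hk₀def] at h0
      have := Nat.find_spec hex
      rw [h0] at this
      simp only [Nat.add_zero] at this
      have hja := hadj' j hj (Nat.mod_lt _ hn)
      rw [hjeq] at hja
      rw [← hja] at this
      exact hout this
    · exact h
  have hi : (j + k₀) % L.length < L.length := Nat.mod_lt _ hn
  refine ⟨L[(j + k₀) % L.length]'hi, List.getElem_mem _, ?_, ?_⟩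
  · have hmin := Nat.find_min hex (m := k₀ - 1) (by omega)
    intro hcon
    apply hmin
    have : j + 1 + (k₀ - 1) = j + k₀ := by omega
    simp only [this]
    exact hcon
  · have hstep := hadj' ((j + k₀) % L.length) hi (Nat.mod_lt _ hn)
    rw [hstep]
    have : ((j + k₀) % L.length + 1) % L.length = (j + 1 + k₀) % L.length := by
      rw [Nat.mod_add_mod]
      congr 1
      omega
    simp only [this]
    exact hk₀

lemma crossing_cases {W : Finset G.V} {e : G.E} (h : G.crossing W e) :
    (G.src e ∈ W ∧ G.tgt e ∉ W) ∨ (G.src e ∉ W ∧ G.tgt e ∈ W) := by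
  unfold WGraph.crossing at h
  rw [ne_eq, eq_iff_iff] at h
  tauto

lemma crossing_of {W : Finset G.V} {e : G.E}
    (h : (G.src e ∈ W ∧ G.tgt e ∉ W) ∨ (G.src e ∉ W ∧ G.tgt e ∈ W)) : G.crossing W e := by
  unfold WGraph.crossing
  rw [ne_eq, eq_iff_iff]
  tauto

lemma cutSum (φ : G.E → ℤ) (W : Finset G.V) :
    ∑ v ∈ W, G.divOf φ v =
      ∑ e ∈ Finset.univ.filter (fun e => G.crossing W e),
        (if G.tgt e ∈ W then φ e else -φ e) := by
  classical
  have h1 : ∑ v ∈ W, G.divOf φ v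
      = ∑ e : G.E, ((if G.tgt e ∈ W then φ e else 0) - (if G.src e ∈ W then φ e else 0)) := by
    unfold WGraph.divOf
    rw [Finset.sum_sub_distrib, Finset.sum_comm, Finset.sum_comm (s := W)]
    rw [Finset.sum_sub_distrib]
    congr 1
    · exact Finset.sum_congr rfl (fun e _ => Finset.sum_ite_eq W (G.tgt e) (fun _ => φ e))
    · exact Finset.sum_congr rfl (fun e _ => Finset.sum_ite_eq W (G.src e) (fun _ => φ e))
  rw [h1, ← Finset.sum_filter_add_sum_filter_not Finset.univ (fun e => G.crossing W e)]
  have h2 : ∑ e ∈ Finset.univ.filter (fun e => ¬ G.crossing W e),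
      ((if G.tgt e ∈ W then φ e else 0) - (if G.src e ∈ W then φ e else 0)) = 0 := by
    apply Finset.sum_eq_zero
    intro e he
    have hnc : ¬ G.crossing W e := (Finset.mem_filter.mp he).2
    unfold WGraph.crossing at hnc
    rw [ne_eq, not_not, eq_iff_iff] at hnc
    by_cases ht : G.tgt e ∈ W
    · rw [if_pos ht, if_pos (hnc.mpr ht)]; ring
    · rw [if_neg ht, if_neg (fun hs => ht (hnc.mp hs))]; ring
  rw [h2, add_zero]
  apply Finset.sum_congr rfl
  intro e he
  have hc : G.crossing W e := (Finset.mem_filter.mp he).2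
  rcases crossing_cases hc with ⟨hs, ht⟩ | ⟨hs, ht⟩
  · rw [if_neg ht, if_neg ht, if_pos hs]; ring
  · rw [if_pos ht, if_pos ht, if_neg hs]; ring

lemma semiBound (D : G.V → ℤ) (hss : G.Semistable G.canPol D)
    (W : Finset G.V) (hW : W ≠ Finset.univ) :
    ∑ v ∈ W, (G.K v - 2 * D v) ≤ (G.delta W : ℤ) := by
  have h := hss W hW
  unfold WGraph.beta at h
  have hcan : ∑ v ∈ W, G.canPol v = (∑ v ∈ W, (G.K v : ℚ)) / 2 := by
    rw [Finset.sum_div]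
    exact Finset.sum_congr rfl (fun v _ => rfl)
  rw [hcan] at h
  have h2 : ((∑ v ∈ W, (G.K v - 2 * D v) : ℤ) : ℚ) ≤ ((G.delta W : ℤ) : ℚ) := by
    push_cast
    rw [Finset.sum_sub_distrib, ← Finset.mul_sum]
    linarith
  exact_mod_cast h2

lemma divOf_sub (φ₁ φ₂ : G.E → ℤ) (v : G.V) :
    G.divOf (fun e => φ₁ e - φ₂ e) v = G.divOf φ₁ v - G.divOf φ₂ v := by
  unfold WGraph.divOf
  have hA : ∑ e : G.E, (if G.tgt e = v then φ₁ e - φ₂ e else 0)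
      = ∑ e : G.E, ((if G.tgt e = v then φ₁ e else 0) - (if G.tgt e = v then φ₂ e else 0)) :=
    Finset.sum_congr rfl (fun e _ => by split <;> simp)
  have hB : ∑ e : G.E, (if G.src e = v then φ₁ e - φ₂ e else 0)
      = ∑ e : G.E, ((if G.src e = v then φ₁ e else 0) - (if G.src e = v then φ₂ e else 0)) :=
    Finset.sum_congr rfl (fun e _ => by split <;> simp)
  rw [hA, hB, Finset.sum_sub_distrib, Finset.sum_sub_distrib]
  ring

lemma oe_cases (φ : G.E → ℤ) (oe : G.OEdge) :
    (G.osrc oe = G.src oe.1 ∧ G.otgt oe = G.tgt oe.1 ∧ G.flowVal φ oe = φ oe.1) ∨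
    (G.osrc oe = G.tgt oe.1 ∧ G.otgt oe = G.src oe.1 ∧ G.flowVal φ oe = -φ oe.1) := by
  rcases oe with ⟨e, b⟩
  cases b
  · right; simp [WGraph.osrc, WGraph.otgt, WGraph.flowVal]
  · left; simp [WGraph.osrc, WGraph.otgt, WGraph.flowVal]

end Stmt4Aux

/-- For a semistable divisor `D` on a connected graph
(canonical polarization of degree `g-1`) there is at most one acyclic flow
`φ` with `2D + Div(φ) = K_Γ`. -/
theorem stmt4 (G : WGraph) (hconn : G.Connected) (D : G.V → ℤ)
    (hss : G.Semistable G.canPol D) (φ₁ φ₂ : G.E → ℤ)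
    (h₁ : G.Acyclic φ₁) (heq₁ : ∀ v, 2 * D v + G.divOf φ₁ v = G.K v)
    (h₂ : G.Acyclic φ₂) (heq₂ : ∀ v, 2 * D v + G.divOf φ₂ v = G.K v) :
    φ₁ = φ₂ := by
  classical
  by_contra hnefn
  have hψex : ∃ e, φ₁ e - φ₂ e ≠ 0 := by
    by_contra hz
    push_neg at hz
    apply hnefn
    funext e
    have := hz e
    omega
  obtain ⟨e₀, he₀⟩ := hψex
  set ψ : G.E → ℤ := fun e => φ₁ e - φ₂ e with hψdef
  have hdiv : ∀ v, G.divOf ψ v = 0 := by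
    intro v
    rw [hψdef, Stmt4Aux.divOf_sub]
    have hh1 := heq₁ v
    have hh2 := heq₂ v
    omega
  obtain ⟨γ, hγcyc, hγval⟩ := Stmt4Aux.exists_pos_cycle ψ hdiv e₀ he₀
  have hfl : ∀ oe : G.OEdge, G.flowVal ψ oe = G.flowVal φ₁ oe - G.flowVal φ₂ oe := by
    rintro ⟨e, b⟩
    cases b <;> simp [WGraph.flowVal, hψdef] <;> ring
  have hγne : γ ≠ [] := hγcyc.1
  -- an edge of γ where φ₂ is negative
  have hneg : ∃ oe ∈ γ, G.flowVal φ₂ oe ≤ -1 := by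
    by_contra hno
    push_neg at hno
    apply h₁
    refine ⟨γ, hγcyc, ?_, ⟨γ.head hγne, List.head_mem hγne, ?_⟩⟩
    · intro oe hoe
      have ha := hγval oe hoe
      have hb := hno oe hoe
      rw [hfl] at ha
      omega
    · have ha := hγval _ (List.head_mem hγne)
      have hb := hno _ (List.head_mem hγne)
      rw [hfl] at ha
      omega
  obtain ⟨oen, hoenm, hoenneg⟩ := hneg
  -- φ₂-nonnegative reachability from osrc oen does not reach otgt oen
  have hrev2 : 1 ≤ G.flowVal φ₂ (oen.1, !oen.2) := by
    rw [Stmt4Aux.flowVal_not]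
    rw [show ((oen.1, oen.2) : G.OEdge) = oen from Prod.mk.eta]
    omega
  have hnr2' := Stmt4Aux.not_reach_back φ₂ h₂ _ hrev2
  rw [Stmt4Aux.otgt_not, Stmt4Aux.osrc_not] at hnr2'
  rw [show ((oen.1, oen.2) : G.OEdge) = oen from Prod.mk.eta] at hnr2'
  -- hnr2' : ¬ RTG (Step φ₂) (osrc oen) (otgt oen)
  obtain ⟨oeX, hoeXm, hoeXsrc, hoeXtgt⟩ := Stmt4Aux.cycle_reenter γ hγcyc
    (fun v => Relation.ReflTransGen (Stmt4Aux.Step G φ₂) (G.osrc oen) v) oen hoenm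
    Relation.ReflTransGen.refl hnr2'
  -- φ₂ flows at least 1 along oeX
  have hφ₂X : 1 ≤ G.flowVal φ₂ oeX := by
    by_contra hcon
    push_neg at hcon
    apply hoeXsrc
    refine Relation.ReflTransGen.tail hoeXtgt ?_
    refine ⟨(oeX.1, !oeX.2), ?_, ?_, ?_⟩
    · rw [Stmt4Aux.flowVal_not]
      rw [show ((oeX.1, oeX.2) : G.OEdge) = oeX from Prod.mk.eta]
      omega
    · rw [Stmt4Aux.osrc_not]
    · rw [Stmt4Aux.otgt_not]
  have hφ₁X : 2 ≤ G.flowVal φ₁ oeX := by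
    have := hγval oeX hoeXm
    rw [hfl] at this
    omega
  -- the φ₁-nonnegative reachable set from otgt oeX
  set W : Finset G.V :=
    Finset.univ.filter
      (fun v => Relation.ReflTransGen (Stmt4Aux.Step G φ₁) (G.otgt oeX) v) with hWdef
  have hmemW : ∀ v, v ∈ W ↔ Relation.ReflTransGen (Stmt4Aux.Step G φ₁) (G.otgt oeX) v := by
    intro v; simp [hWdef]
  have hbW : G.otgt oeX ∈ W := (hmemW _).mpr Relation.ReflTransGen.refl
  have hnr1 : ¬ Relation.ReflTransGen (Stmt4Aux.Step G φ₁) (G.otgt oeX) (G.osrc oeX) :=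
    Stmt4Aux.not_reach_back φ₁ h₁ oeX (by omega)
  have haW : G.osrc oeX ∉ W := fun h => hnr1 ((hmemW _).mp h)
  have hWne : W ≠ Finset.univ := by
    intro h
    exact haW (h ▸ Finset.mem_univ _)
  -- every crossing edge carries φ₁-flow at least 1 into W
  have hterm : ∀ e ∈ Finset.univ.filter (fun e => G.crossing W e),
      1 ≤ (if G.tgt e ∈ W then φ₁ e else -φ₁ e) := by
    intro e he
    have hc := (Finset.mem_filter.mp he).2
    rcases Stmt4Aux.crossing_cases hc with ⟨hs, ht⟩ | ⟨hs, ht⟩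
    · rw [if_neg ht]
      by_contra hcon
      push_neg at hcon
      apply ht
      rw [hmemW]
      refine Relation.ReflTransGen.tail ((hmemW _).mp hs) ?_
      exact ⟨(e, true), by simp [WGraph.flowVal]; omega, by simp [WGraph.osrc],
        by simp [WGraph.otgt]⟩
    · rw [if_pos ht]
      by_contra hcon
      push_neg at hcon
      apply hs
      rw [hmemW]
      refine Relation.ReflTransGen.tail ((hmemW _).mp ht) ?_
      exact ⟨(e, false), by simp [WGraph.flowVal]; omega, by simp [WGraph.osrc],
        by simp [WGraph.otgt]⟩
  -- the special edge crosses into W with value at least 2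
  have hX : G.crossing W oeX.1 ∧ 2 ≤ (if G.tgt oeX.1 ∈ W then φ₁ oeX.1 else -φ₁ oeX.1) := by
    rcases Stmt4Aux.oe_cases φ₁ oeX with ⟨hs, ht, hf⟩ | ⟨hs, ht, hf⟩
    · have h1 : G.src oeX.1 ∉ W := hs ▸ haW
      have h2 : G.tgt oeX.1 ∈ W := ht ▸ hbW
      refine ⟨Stmt4Aux.crossing_of (Or.inr ⟨h1, h2⟩), ?_⟩
      rw [if_pos h2, ← hf]
      exact hφ₁X
    · have h1 : G.tgt oeX.1 ∉ W := hs ▸ haW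
      have h2 : G.src oeX.1 ∈ W := ht ▸ hbW
      refine ⟨Stmt4Aux.crossing_of (Or.inl ⟨h2, h1⟩), ?_⟩
      rw [if_neg h1]
      omega
  have hXmem : oeX.1 ∈ Finset.univ.filter (fun e => G.crossing W e) := by
    simp [hX.1]
  -- the cut sum exceeds δ_W
  have hsum : (G.delta W : ℤ) + 1 ≤ ∑ v ∈ W, G.divOf φ₁ v := by
    rw [Stmt4Aux.cutSum φ₁ W]
    rw [← Finset.add_sum_erase _ _ hXmem]
    have hrest := Finset.card_nsmul_le_sum
      ((Finset.univ.filter (fun e => G.crossing W e)).erase oeX.1)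
      (fun e => if G.tgt e ∈ W then φ₁ e else -φ₁ e) (1 : ℤ)
      (fun x hx => hterm x (Finset.mem_of_mem_erase hx))
    rw [Finset.card_erase_of_mem hXmem] at hrest
    simp only [nsmul_eq_mul, mul_one] at hrest
    have hpos : 0 < (Finset.univ.filter (fun e => G.crossing W e)).card :=
      Finset.card_pos.mpr ⟨oeX.1, hXmem⟩
    have hd : G.delta W = (Finset.univ.filter (fun e => G.crossing W e)).card := rfl
    rw [hd]
    have h2 := hX.2
    push_cast at hrest ⊢
    omega
  have hdiveq : ∑ v ∈ W, G.divOf φ₁ v = ∑ v ∈ W, (G.K v - 2 * D v) :=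
    Finset.sum_congr rfl (fun v _ => by have := heq₁ v; omega)
  have hle := Stmt4Aux.semiBound D hss W hWne
  rw [hdiveq] at hsum
  omega
end
end
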